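/- arXiv:2404.13382 — 6 statements merged into one kernel-verified Lean document; each statement's English description precedes it below -/
import Mathlib

section
/- Let $F : \mathbb{R}^n \to \mathbb{R}$ be differentiable with $L$-Lipschitz gradient, let $x \in \mathbb{R}^n$, $g \in \mathbb{R}^n$, $\alpha > 0$, $0 < \gamma_2 < \gamma_1$, and set $p = -\gamma_1 \alpha g$ and $x^+ = x + p$. If $\|g\| < 1/\gamma_1$ (or indeed for any $g$), then $F(x^+) \le F(x) - \tfrac{1}{2}\alpha(\gamma_2 - \alpha\gamma_1^2 L)\|g\|^2 + \alpha \frac{\gamma_1^2}{2\gamma_2}\|\nabla F(x) - g\|^2$. -/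
open InnerProductSpace intervalIntegral
local notation "⟪" a ", " b "⟫" => @inner ℝ _ _ a b

lemma descent {n : ℕ} (F : EuclideanSpace ℝ (Fin n) → ℝ)
    (F' : EuclideanSpace ℝ (Fin n) → EuclideanSpace ℝ (Fin n)) (L : ℝ) (hL : 0 ≤ L)
    (hgrad : ∀ x, HasGradientAt F (F' x) x)
    (hlip : LipschitzWith (Real.toNNReal L) F')
    (x v : EuclideanSpace ℝ (Fin n)) :
    F (x + v) ≤ F x + ⟪F' x, v⟫ + L / 2 * ‖v‖ ^ 2 := by
  set φ : ℝ → ℝ := fun t => F (x + t • v) with hφ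
  have hderiv : ∀ t : ℝ, HasDerivAt φ ⟪F' (x + t • v), v⟫ t := by
    intro t
    have h1 : HasDerivAt (fun t : ℝ => x + t • v) v t := by
      simpa using ((hasDerivAt_id t).smul_const v).const_add x
    have h2 := ((hgrad (x + t • v)).hasFDerivAt.comp_hasDerivAt t h1)
    simp at h2
    exact h2
  have hcont : Continuous fun t : ℝ => ⟪F' (x + t • v), v⟫ := by
    apply Continuous.inner _ continuous_const
    exact hlip.continuous.comp (by continuity)
  have hint : F (x + v) - F x = ∫ t in (0:ℝ)..1, ⟪F' (x + t • v), v⟫ := by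
    have h := intervalIntegral.integral_eq_sub_of_hasDerivAt
      (f := φ) (f' := fun t => ⟪F' (x + t • v), v⟫)
      (fun t _ => hderiv t) (hcont.intervalIntegrable 0 1)
    have h1 : φ 1 = F (x + v) := by simp [hφ]
    have h0 : φ 0 = F x := by simp [hφ]
    rw [h, h1, h0]
  have hbound : ∀ t ∈ Set.Icc (0:ℝ) 1,
      ⟪F' (x + t • v), v⟫ ≤ ⟪F' x, v⟫ + L * t * ‖v‖ ^ 2 := by
    intro t ht
    have h1 : ⟪F' (x + t • v) - F' x, v⟫ ≤ ‖F' (x + t • v) - F' x‖ * ‖v‖ :=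
      real_inner_le_norm _ _
    have h2 : ‖F' (x + t • v) - F' x‖ ≤ L * (t * ‖v‖) := by
      have h := hlip.dist_le_mul (x + t • v) x
      simp only [dist_eq_norm, add_sub_cancel_left, norm_smul] at h
      calc ‖F' (x + t • v) - F' x‖ ≤ L.toNNReal * (‖(t:ℝ)‖ * ‖v‖) := h
        _ = L * (t * ‖v‖) := by
            rw [Real.norm_eq_abs, abs_of_nonneg ht.1, Real.coe_toNNReal _ hL]
    have h3 : ⟪F' (x + t • v), v⟫ = ⟪F' x, v⟫ + ⟪F' (x + t • v) - F' x, v⟫ := by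
      rw [inner_sub_left]; ring
    nlinarith [norm_nonneg v, norm_nonneg (F' (x + t • v) - F' x)]
  have hile : (∫ t in (0:ℝ)..1, ⟪F' (x + t • v), v⟫)
      ≤ ∫ t in (0:ℝ)..1, (⟪F' x, v⟫ + L * t * ‖v‖ ^ 2) := by
    apply intervalIntegral.integral_mono_on (by norm_num)
      (hcont.intervalIntegrable 0 1) (by apply Continuous.intervalIntegrable; continuity)
    exact hbound
  have hval : (∫ t in (0:ℝ)..1, (⟪F' x, v⟫ + L * t * ‖v‖ ^ 2)) = ⟪F' x, v⟫ + L / 2 * ‖v‖ ^ 2 := by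
    have he : (fun t : ℝ => ⟪F' x, v⟫ + L * t * ‖v‖ ^ 2)
        = fun t : ℝ => ⟪F' x, v⟫ + (L * ‖v‖ ^ 2) * t := by funext t; ring
    rw [he, intervalIntegral.integral_add intervalIntegrable_const
      ((by exact ((continuous_const.mul continuous_id').intervalIntegrable 0 1) : IntervalIntegrable (fun t : ℝ => L * ‖v‖ ^ 2 * t) MeasureTheory.volume 0 1)),
      intervalIntegral.integral_const, intervalIntegral.integral_const_mul, integral_id]
    simp; ring
  linarith [hint ▸ hile, hval ▸ hile]

theorem stmt_4 {n : ℕ} (F : EuclideanSpace ℝ (Fin n) → ℝ)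
    (F' : EuclideanSpace ℝ (Fin n) → EuclideanSpace ℝ (Fin n)) (L : ℝ) (hL : 0 < L)
    (hgrad : ∀ x, HasGradientAt F (F' x) x)
    (hlip : LipschitzWith (Real.toNNReal L) F')
    (x g : EuclideanSpace ℝ (Fin n)) (α γ₁ γ₂ : ℝ)
    (hα : 0 < α) (hγ₂ : 0 < γ₂) (hγ : γ₂ < γ₁) :
    F (x + (-(γ₁ * α)) • g) ≤
      F x - (1 / 2) * α * (γ₂ - α * γ₁ ^ 2 * L) * ‖g‖ ^ 2
        + α * (γ₁ ^ 2 / (2 * γ₂)) * ‖F' x - g‖ ^ 2 := by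
  have hd := descent F F' L hL.le hgrad hlip x ((-(γ₁ * α)) • g)
  set e := F' x - g with he
  have hip : ⟪F' x, (-(γ₁ * α)) • g⟫ = -(γ₁ * α) * (‖g‖ ^ 2 + ⟪e, g⟫) := by
    rw [real_inner_smul_right, he, inner_sub_left, real_inner_self_eq_norm_sq]
    ring
  have hnp : ‖(-(γ₁ * α)) • g‖ ^ 2 = γ₁ ^ 2 * α ^ 2 * ‖g‖ ^ 2 := by
    rw [norm_smul, mul_pow, Real.norm_eq_abs, sq_abs]
    ring
  have hC : -(‖e‖ * ‖g‖) ≤ ⟪e, g⟫ := neg_le_of_abs_le (abs_real_inner_le_norm e g)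
  have young : γ₁ * (‖e‖ * ‖g‖) ≤ γ₁ ^ 2 / (2 * γ₂) * ‖e‖ ^ 2 + γ₂ / 2 * ‖g‖ ^ 2 := by
    have key : γ₁ ^ 2 / (2 * γ₂) * ‖e‖ ^ 2 + γ₂ / 2 * ‖g‖ ^ 2 - γ₁ * (‖e‖ * ‖g‖)
        = (γ₁ * ‖e‖ - γ₂ * ‖g‖) ^ 2 / (2 * γ₂) := by
      field_simp
      ring
    nlinarith [div_nonneg (sq_nonneg (γ₁ * ‖e‖ - γ₂ * ‖g‖)) (by linarith : (0:ℝ) ≤ 2 * γ₂)]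
  rw [hip, hnp] at hd
  nlinarith [mul_le_mul_of_nonneg_left young hα.le,
    mul_le_mul_of_nonneg_left hC (mul_pos (by linarith : (0:ℝ) < γ₁) hα).le,
    mul_nonneg (mul_nonneg (by linarith : (0:ℝ) ≤ γ₁ - γ₂) hα.le) (sq_nonneg ‖g‖)]
end

section
/- Let $F : \mathbb{R}^n \to \mathbb{R}$ be differentiable with $L$-Lipschitz gradient, let $x \in \mathbb{R}^n$, $g \in \mathbb{R}^n$ with $g \ne 0$, $\alpha > 0$, $0 < \gamma_2 < \gamma_1$, and suppose $1/\gamma_1 \le \|g\| \le 1/\gamma_2$. Set $p = -\alpha g / \|g\|$ and $x^+ = x + p$. Then $F(x^+) \le F(x) - \tfrac{1}{2}\alpha(\gamma_2 - \alpha\gamma_1^2 L)\|g\|^2 + \alpha \frac{\gamma_1^2}{2\gamma_2}\|\nabla F(x) - g\|^2$. -/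
set_option maxHeartbeats 1000000 in
open InnerProductSpace in
lemma descent_lemma {n : ℕ} (F : EuclideanSpace ℝ (Fin n) → ℝ)
    (F' : EuclideanSpace ℝ (Fin n) → EuclideanSpace ℝ (Fin n)) (L : ℝ) (hL : 0 ≤ L)
    (hgrad : ∀ x, HasGradientAt F (F' x) x)
    (hlip : LipschitzWith (Real.toNNReal L) F')
    (x p : EuclideanSpace ℝ (Fin n)) :
    F (x + p) ≤ F x + ⟪F' x, p⟫_ℝ + L / 2 * ‖p‖ ^ 2 := by
  have hφ : ∀ t : ℝ, HasDerivAt (fun t : ℝ => F (x + t • p)) ⟪F' (x + t • p), p⟫_ℝ t := by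
    intro t
    have hc : HasDerivAt (fun t : ℝ => x + t • p) p t := by
      simpa using ((hasDerivAt_id t).smul_const p).const_add x
    have := ((hgrad (x + t • p)).hasFDerivAt.comp_hasDerivAt t hc)
    simp at this
    exact this
  have hcont : Continuous fun t : ℝ => ⟪F' (x + t • p), p⟫_ℝ := by
    exact (hlip.continuous.comp (by continuity)).inner continuous_const
  have hint : F (x + p) - F x = ∫ t in (0:ℝ)..1, ⟪F' (x + t • p), p⟫_ℝ := by
    rw [intervalIntegral.integral_eq_sub_of_hasDerivAt (fun t _ => hφ t)
      (hcont.intervalIntegrable 0 1)]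
    simp
  have hb : ∫ t in (0:ℝ)..1, ⟪F' (x + t • p), p⟫_ℝ
      ≤ ∫ t in (0:ℝ)..1, (⟪F' x, p⟫_ℝ + L * ‖p‖ ^ 2 * t) := by
    apply intervalIntegral.integral_mono_on (by norm_num) (hcont.intervalIntegrable 0 1)
      ((by fun_prop : Continuous fun t : ℝ => ⟪F' x, p⟫_ℝ + L * ‖p‖ ^ 2 * t).intervalIntegrable 0 1)
    intro t ht
    have h1 : ⟪F' (x + t • p), p⟫_ℝ - ⟪F' x, p⟫_ℝ = ⟪F' (x + t • p) - F' x, p⟫_ℝ := by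
      rw [inner_sub_left]
    have h2 : ⟪F' (x + t • p) - F' x, p⟫_ℝ ≤ ‖F' (x + t • p) - F' x‖ * ‖p‖ :=
      real_inner_le_norm _ _
    have h3 : ‖F' (x + t • p) - F' x‖ ≤ L * (t * ‖p‖) := by
      have := hlip.dist_le_mul (x + t • p) x
      simp only [dist_eq_norm, add_sub_cancel_left] at this
      calc ‖F' (x + t • p) - F' x‖ ≤ (L.toNNReal : ℝ) * ‖t • p‖ := this
        _ = L * (t * ‖p‖) := by
            rw [norm_smul, Real.coe_toNNReal _ hL, Real.norm_eq_abs,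
              abs_of_nonneg ht.1]
    have hp0 : (0:ℝ) ≤ ‖p‖ := norm_nonneg _
    nlinarith [h2.trans (mul_le_mul_of_nonneg_right h3 hp0)]
  have hval : ∫ t in (0:ℝ)..1, (⟪F' x, p⟫_ℝ + L * ‖p‖ ^ 2 * t)
      = ⟪F' x, p⟫_ℝ + L / 2 * ‖p‖ ^ 2 := by
    rw [intervalIntegral.integral_add intervalIntegrable_const
      ((by fun_prop : Continuous fun t : ℝ => L * ‖p‖ ^ 2 * t).intervalIntegrable 0 1),
      intervalIntegral.integral_const_mul, integral_id]
    simp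
    ring
  linarith [hint ▸ (hb.trans_eq hval)]

set_option maxHeartbeats 1000000 in
open InnerProductSpace in
theorem stmt_5 {n : ℕ} (F : EuclideanSpace ℝ (Fin n) → ℝ)
    (F' : EuclideanSpace ℝ (Fin n) → EuclideanSpace ℝ (Fin n)) (L : ℝ) (hL : 0 < L)
    (hgrad : ∀ x, HasGradientAt F (F' x) x)
    (hlip : LipschitzWith (Real.toNNReal L) F')
    (x g : EuclideanSpace ℝ (Fin n)) (hg : g ≠ 0) (α γ₁ γ₂ : ℝ)
    (hα : 0 < α) (hγ₂ : 0 < γ₂) (hγ : γ₂ < γ₁)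
    (hlo : 1 / γ₁ ≤ ‖g‖) (hhi : ‖g‖ ≤ 1 / γ₂) :
    F (x + (-(α / ‖g‖)) • g) ≤
      F x - (1 / 2) * α * (γ₂ - α * γ₁ ^ 2 * L) * ‖g‖ ^ 2
        + α * (γ₁ ^ 2 / (2 * γ₂)) * ‖F' x - g‖ ^ 2 := by
  have hγ₁ : 0 < γ₁ := hγ₂.trans hγ
  have hgn : 0 < ‖g‖ := norm_pos_iff.mpr hg
  set p : EuclideanSpace ℝ (Fin n) := (-(α / ‖g‖)) • g with hp
  have key := descent_lemma F F' L hL.le hgrad hlip x p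
  have hpn : ‖p‖ = α := by
    rw [hp, norm_smul, Real.norm_eq_abs, abs_neg, abs_of_nonneg (div_nonneg hα.le hgn.le)]
    field_simp
  set E : ℝ := ‖F' x - g‖ with hE
  have hE0 : 0 ≤ E := norm_nonneg _
  have hinner : ⟪F' x, p⟫_ℝ ≤ -(α * ‖g‖) + α * E := by
    have h1 : ⟪F' x, p⟫_ℝ = (-(α / ‖g‖)) * (⟪F' x - g, g⟫_ℝ + ‖g‖ ^ 2) := by
      rw [hp, real_inner_smul_right, inner_sub_left, real_inner_self_eq_norm_sq]
      ring
    have h2 : -⟪F' x - g, g⟫_ℝ ≤ E * ‖g‖ := by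
      have := abs_real_inner_le_norm (F' x - g) g
      rw [abs_le] at this
      linarith [this.1]
    calc ⟪F' x, p⟫_ℝ = (α / ‖g‖) * (-⟪F' x - g, g⟫_ℝ) - (α / ‖g‖) * ‖g‖ ^ 2 := by
          rw [h1]; ring
      _ ≤ (α / ‖g‖) * (E * ‖g‖) - (α / ‖g‖) * ‖g‖ ^ 2 := by
          have := mul_le_mul_of_nonneg_left h2 (div_nonneg hα.le hgn.le)
          linarith
      _ = -(α * ‖g‖) + α * E := by field_simp; ring
  have hA : γ₂ * ‖g‖ ≤ 1 := by
    rw [← le_div_iff₀' hγ₂]; exact hhi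
  have hB : 1 ≤ γ₁ * ‖g‖ := by
    rw [← div_le_iff₀' hγ₁]; exact hlo
  have young : α * E ≤ α * (γ₁ ^ 2 / (2 * γ₂)) * E ^ 2 + α * (γ₂ / (2 * γ₁ ^ 2)) := by
    have h2 : E ≤ γ₁ ^ 2 / (2 * γ₂) * E ^ 2 + γ₂ / (2 * γ₁ ^ 2) := by
      rw [div_mul_eq_mul_div, div_add_div _ _ (by positivity) (by positivity),
        le_div_iff₀ (by positivity)]
      nlinarith [sq_nonneg (γ₁ ^ 2 * E - γ₂)]
    nlinarith [mul_le_mul_of_nonneg_left h2 hα.le]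
  have f1 : (1 / 2) * α * γ₂ * ‖g‖ ^ 2 ≤ (1 / 2) * α * ‖g‖ := by
    nlinarith [mul_le_mul_of_nonneg_left hA (mul_nonneg (by linarith : (0:ℝ) ≤ 1 / 2 * α) hgn.le)]
  have f2 : α * (γ₂ / (2 * γ₁ ^ 2)) ≤ (1 / 2) * α * ‖g‖ := by
    have : γ₂ / (2 * γ₁ ^ 2) ≤ ‖g‖ / 2 := by
      rw [div_le_div_iff₀ (by positivity) (by norm_num)]
      nlinarith
    nlinarith
  have f3 : L / 2 * α ^ 2 ≤ (1 / 2) * α ^ 2 * γ₁ ^ 2 * L * ‖g‖ ^ 2 := by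
    have hBB : 1 ≤ (γ₁ * ‖g‖) ^ 2 := by nlinarith
    nlinarith [mul_le_mul_of_nonneg_left hBB (by positivity : (0:ℝ) ≤ L / 2 * α ^ 2)]
  rw [hpn] at key
  linarith [key, hinner, young, f1, f2, f3]
end

section
/- Let $F : \mathbb{R}^n \to \mathbb{R}$ be differentiable with $L$-Lipschitz gradient, let $x \in \mathbb{R}^n$, $g \in \mathbb{R}^n$, $\alpha > 0$, $0 < \gamma_2 < \gamma_1$, and set $p = -\gamma_2 \alpha g$ and $x^+ = x + p$. Then $F(x^+) \le F(x) - \tfrac{1}{2}\alpha\gamma_2\|g\|^2 + \alpha \frac{\gamma_1^2}{2\gamma_2}\|\nabla F(x) - g\|^2 + \tfrac{1}{2}\alpha^2\gamma_1^2 L \|g\|^2$. -/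
open InnerProductSpace in
theorem descent_aux {E : Type*} [NormedAddCommGroup E] [InnerProductSpace ℝ E] [CompleteSpace E]
    (F : E → ℝ) (F' : E → E) (L : ℝ) (hL : 0 ≤ L)
    (hgrad : ∀ x, HasGradientAt F (F' x) x)
    (hlip : LipschitzWith (Real.toNNReal L) F') (x p : E) :
    F (x + p) ≤ F x + inner ℝ (F' x) p + L / 2 * ‖p‖ ^ 2 := by
  set φ : ℝ → ℝ := fun t => F (x + t • p) - t * inner ℝ (F' x) p - L / 2 * t ^ 2 * ‖p‖ ^ 2 with hφ
  have hd : ∀ t : ℝ, HasDerivAt φ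
      ((inner ℝ (F' (x + t • p)) p : ℝ) - inner ℝ (F' x) p - L * t * ‖p‖ ^ 2) t := by
    intro t
    have h1 : HasDerivAt (fun t : ℝ => x + t • p) p t := by
      simpa using ((hasDerivAt_id t).smul_const p).const_add x
    have h2 : HasDerivAt (fun t : ℝ => F (x + t • p)) ((inner ℝ (F' (x + t • p)) p : ℝ)) t := by
      have := ((hgrad (x + t • p)).hasFDerivAt).comp_hasDerivAt t h1
      exact this
    have h3 : HasDerivAt (fun t : ℝ => t * (inner ℝ (F' x) p : ℝ)) (inner ℝ (F' x) p) t := by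
      simpa using (hasDerivAt_id t).mul_const (inner ℝ (F' x) p : ℝ)
    have h4 : HasDerivAt (fun t : ℝ => L / 2 * t ^ 2 * ‖p‖ ^ 2) (L * t * ‖p‖ ^ 2) t := by
      have := ((hasDerivAt_pow 2 t).const_mul (L / 2)).mul_const (‖p‖ ^ 2)
      refine this.congr_deriv ?_
      ring
    exact (h2.sub h3).sub h4
  have hanti : AntitoneOn φ (Set.Icc 0 1) := by
    apply antitoneOn_of_deriv_nonpos (convex_Icc 0 1)
    · exact Continuous.continuousOn
        (Differentiable.continuous (fun t => (hd t).differentiableAt))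
    · intro t ht
      exact (hd t).differentiableAt.differentiableWithinAt
    · intro t ht
      rw [(hd t).deriv]
      have ht0 : 0 ≤ t := le_of_lt (Set.mem_Ioo.mp (by simpa using ht)).1
      have key : (inner ℝ (F' (x + t • p)) p : ℝ) - inner ℝ (F' x) p ≤ L * t * ‖p‖ ^ 2 := by
        have h1 : (inner ℝ (F' (x + t • p)) p : ℝ) - inner ℝ (F' x) p
            = inner ℝ (F' (x + t • p) - F' x) p := by rw [inner_sub_left]
        rw [h1]
        calc (inner ℝ (F' (x + t • p) - F' x) p : ℝ) ≤ ‖F' (x + t • p) - F' x‖ * ‖p‖ :=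
              real_inner_le_norm _ _
          _ ≤ L * ‖t • p‖ * ‖p‖ := by
              gcongr
              have := hlip.dist_le_mul (x + t • p) x
              rw [Real.coe_toNNReal _ hL] at this
              simpa [dist_eq_norm] using this
          _ = L * t * ‖p‖ ^ 2 := by
              rw [norm_smul, Real.norm_eq_abs, abs_of_nonneg ht0]; ring
      linarith
  have := hanti (Set.mem_Icc.mpr ⟨le_refl 0, zero_le_one⟩) (Set.mem_Icc.mpr ⟨zero_le_one, le_refl 1⟩) zero_le_one
  simp only [hφ, zero_smul, one_smul, add_zero] at this
  nlinarith [this]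
theorem stmt_6 {n : ℕ} (F : EuclideanSpace ℝ (Fin n) → ℝ)
    (F' : EuclideanSpace ℝ (Fin n) → EuclideanSpace ℝ (Fin n)) (L : ℝ) (hL : 0 < L)
    (hgrad : ∀ x, HasGradientAt F (F' x) x)
    (hlip : LipschitzWith (Real.toNNReal L) F')
    (x g : EuclideanSpace ℝ (Fin n)) (α γ₁ γ₂ : ℝ)
    (hα : 0 < α) (hγ₂ : 0 < γ₂) (hγ : γ₂ < γ₁) :
    F (x + (-(γ₂ * α)) • g) ≤
      F x - (1 / 2) * α * γ₂ * ‖g‖ ^ 2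
        + α * (γ₁ ^ 2 / (2 * γ₂)) * ‖F' x - g‖ ^ 2
        + (1 / 2) * α ^ 2 * γ₁ ^ 2 * L * ‖g‖ ^ 2 := by
  have key := descent_aux F F' L hL.le hgrad hlip x ((-(γ₂ * α)) • g)
  have hip : (inner ℝ (F' x) ((-(γ₂ * α)) • g) : ℝ)
      = -(γ₂ * α) * ((inner ℝ (F' x - g) g : ℝ) + ‖g‖ ^ 2) := by
    rw [real_inner_smul_right, inner_sub_left, real_inner_self_eq_norm_sq]
    ring
  have hnp : ‖(-(γ₂ * α)) • g‖ ^ 2 = (γ₂ * α) ^ 2 * ‖g‖ ^ 2 := by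
    rw [norm_smul]
    simp [abs_of_pos (mul_pos hγ₂ hα), mul_pow]
  rw [hip, hnp] at key
  have hinner : -(inner ℝ (F' x - g) g : ℝ) ≤ ‖F' x - g‖ * ‖g‖ := by
    have := real_inner_le_norm (F' x - g) (-g)
    simpa [inner_neg_right] using this
  have hEG : ‖F' x - g‖ * ‖g‖ ≤ (1/2) * ‖F' x - g‖ ^ 2 + (1/2) * ‖g‖ ^ 2 := by
    nlinarith [sq_nonneg (‖F' x - g‖ - ‖g‖)]
  have hE : γ₂ / 2 * ‖F' x - g‖ ^ 2 ≤ γ₁ ^ 2 / (2 * γ₂) * ‖F' x - g‖ ^ 2 := by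
    have h1 : γ₂ / 2 ≤ γ₁ ^ 2 / (2 * γ₂) := by
      rw [div_le_div_iff₀ (by norm_num) (by positivity)]
      nlinarith
    nlinarith [sq_nonneg ‖F' x - g‖]
  have hγsq : γ₂ ^ 2 ≤ γ₁ ^ 2 := by nlinarith
  nlinarith [sq_nonneg ‖g‖, sq_nonneg ‖F' x - g‖, mul_pos hγ₂ hα,
    mul_nonneg (mul_nonneg (mul_nonneg hL.le hα.le) hα.le) (sq_nonneg ‖g‖),
    mul_le_mul_of_nonneg_left hγsq (mul_nonneg (mul_nonneg (mul_nonneg (by norm_num : (0:ℝ) ≤ 1/2) hL.le) (mul_nonneg hα.le hα.le)) (sq_nonneg ‖g‖)),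
    mul_le_mul_of_nonneg_left hinner (mul_nonneg hγ₂.le hα.le),
    mul_le_mul_of_nonneg_left hEG (mul_nonneg hγ₂.le hα.le),
    mul_le_mul_of_nonneg_left hE hα.le]
end

section
/- Let $F : \mathbb{R}^n \to \mathbb{R}$ be differentiable with $L$-Lipschitz gradient, $x \in \mathbb{R}^n$, $\alpha > 0$, $0 < \gamma_2 < \gamma_1$. Let $g$ be a random vector with $\mathbb{E}[g] = \nabla F(x)$, and let the TRish step be $p = -\gamma_1\alpha g$ if $\|g\| < 1/\gamma_1$, $p = -\alpha g/\|g\|$ if $1/\gamma_1 \le \|g\| \le 1/\gamma_2$, and $p = -\gamma_2\alpha g$ if $\|g\| > 1/\gamma_2$. Set $\beta = \frac{\gamma_1^2 - \gamma_2^2}{2\gamma_2} + \tfrac{1}{2}\alpha\gamma_1^2 L$. Then $\mathbb{E}[F(x + p)] \le F(x) - \alpha\frac{\gamma_1^2}{2\gamma_2}\|\nabla F(x)\|^2 + \alpha\beta\,\mathbb{E}[\|g\|^2]$. -/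
open MeasureTheory

open scoped RealInnerProductSpace

theorem descent_aux_stmt7 {n : ℕ} (F : EuclideanSpace ℝ (Fin n) → ℝ)
    (F' : EuclideanSpace ℝ (Fin n) → EuclideanSpace ℝ (Fin n)) (L : ℝ) (hL : 0 ≤ L)
    (hgrad : ∀ y, HasGradientAt F (F' y) y)
    (hlip : LipschitzWith (Real.toNNReal L) F')
    (x v : EuclideanSpace ℝ (Fin n)) :
    F (x + v) ≤ F x + ⟪F' x, v⟫ + L / 2 * ‖v‖ ^ 2 := by
  set φ : ℝ → ℝ := fun t => F (x + t • v) - t * ⟪F' x, v⟫ - L * t ^ 2 / 2 * ‖v‖ ^ 2 with hφdef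
  have key : ∀ t : ℝ,
      HasDerivAt φ (⟪F' (x + t • v), v⟫ - ⟪F' x, v⟫ - L * t * ‖v‖ ^ 2) t := by
    intro t
    have h1 : HasDerivAt (fun s : ℝ => x + s • v) v t := by
      simpa using ((hasDerivAt_id t).smul_const v).const_add x
    have h2 := (hgrad (x + t • v)).hasFDerivAt.comp_hasDerivAt t h1
    have h3 : HasDerivAt (fun s : ℝ => s * ⟪F' x, v⟫) ⟪F' x, v⟫ t := by
      simpa using (hasDerivAt_id t).mul_const (⟪F' x, v⟫ : ℝ)
    have h4 : HasDerivAt (fun s : ℝ => L * s ^ 2 / 2 * ‖v‖ ^ 2)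
        (L * t * ‖v‖ ^ 2) t := by
      have h5 := (hasDerivAt_pow 2 t).const_mul (L / 2 * ‖v‖ ^ 2)
      have e : (fun s : ℝ => L * s ^ 2 / 2 * ‖v‖ ^ 2) = fun y => L / 2 * ‖v‖ ^ 2 * y ^ 2 := by
        funext s; ring
      rw [e]
      exact h5.congr_deriv (by push_cast; ring)
    have h6 := (h2.sub h3).sub h4
    exact h6.congr_deriv rfl
  have hanti : AntitoneOn φ (Set.Icc (0:ℝ) 1) := by
    apply antitoneOn_of_deriv_nonpos (convex_Icc 0 1)
    · exact fun t _ => ((key t).continuousAt).continuousWithinAt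
    · exact fun t _ => ((key t).differentiableAt).differentiableWithinAt
    · intro t ht
      rw [interior_Icc] at ht
      rw [(key t).deriv]
      have hcs : ⟪F' (x + t • v) - F' x, v⟫ ≤ ‖F' (x + t • v) - F' x‖ * ‖v‖ :=
        real_inner_le_norm _ _
      have hl : ‖F' (x + t • v) - F' x‖ ≤ L * (t * ‖v‖) := by
        have := hlip.dist_le_mul (x + t • v) x
        rw [dist_eq_norm, dist_eq_norm] at this
        simpa [Real.coe_toNNReal L hL, norm_smul, abs_of_pos ht.1,
          add_sub_cancel_left, mul_assoc] using this
      have hv : (0:ℝ) ≤ ‖v‖ := norm_nonneg _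
      have h7 : ⟪F' (x + t • v), v⟫ - ⟪F' x, v⟫ ≤ L * t * ‖v‖ ^ 2 := by
        have hsub := inner_sub_left (𝕜 := ℝ) (F' (x + t • v)) (F' x) v
        nlinarith [mul_le_mul_of_nonneg_right hl hv]
      linarith
  have h01 : φ 1 ≤ φ 0 :=
    hanti (Set.mem_Icc.2 ⟨le_refl 0, zero_le_one⟩) (Set.mem_Icc.2 ⟨zero_le_one, le_refl 1⟩)
      zero_le_one
  have e0 : φ 0 = F x := by simp [hφdef]
  have e1 : φ 1 = F (x + v) - ⟪F' x, v⟫ - L * 1 ^ 2 / 2 * ‖v‖ ^ 2 := by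
    simp only [hφdef, one_smul, one_mul]
  rw [e0, e1] at h01
  nlinarith [h01]

theorem algebra_aux_stmt7 (Fx α γ₁ γ₂ L a s : ℝ) (hγ₂ : γ₂ ≠ 0) :
    Fx - α * (γ₁ ^ 2 / (2 * γ₂)) * a +
      α * ((γ₁ ^ 2 - γ₂ ^ 2) / (2 * γ₂) + 1 / 2 * α * γ₁ ^ 2 * L) * s -
      ((Fx - γ₂ * α / 2 * a + γ₁ * α / 2 * a) + (-(γ₁ * α)) * a +
        ((γ₁ * α - γ₂ * α) / 2 + L * γ₁ ^ 2 * α ^ 2 / 2) * s) =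
      α / (2 * γ₂) * (γ₂ ^ 2 * a + (γ₁ ^ 2 - γ₁ * γ₂) * (s - a)) := by
  field_simp
  ring

set_option maxHeartbeats 1000000 in
theorem stmt_7 {n : ℕ} (F : EuclideanSpace ℝ (Fin n) → ℝ)
    (F' : EuclideanSpace ℝ (Fin n) → EuclideanSpace ℝ (Fin n)) (L : ℝ) (hL : 0 < L)
    (hgrad : ∀ y, HasGradientAt F (F' y) y)
    (hlip : LipschitzWith (Real.toNNReal L) F')
    (x : EuclideanSpace ℝ (Fin n)) (α γ₁ γ₂ β : ℝ)
    (hα : 0 < α) (hγ₂ : 0 < γ₂) (hγ : γ₂ < γ₁)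
    (hβ : β = (γ₁ ^ 2 - γ₂ ^ 2) / (2 * γ₂) + (1 / 2) * α * γ₁ ^ 2 * L)
    {Ω : Type*} [MeasurableSpace Ω] (μ : Measure Ω) [IsProbabilityMeasure μ]
    (g : Ω → EuclideanSpace ℝ (Fin n))
    (p : Ω → EuclideanSpace ℝ (Fin n))
    (hp : ∀ ω, p ω =
      if ‖g ω‖ < 1 / γ₁ then (-(γ₁ * α)) • g ω
      else if ‖g ω‖ ≤ 1 / γ₂ then (-(α / ‖g ω‖)) • g ω
      else (-(γ₂ * α)) • g ω)
    (hint : Integrable g μ)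
    (hintF : Integrable (fun ω => F (x + p ω)) μ)
    (hint2 : Integrable (fun ω => ‖g ω‖ ^ 2) μ)
    (hmean : ∫ ω, g ω ∂μ = F' x) :
    ∫ ω, F (x + p ω) ∂μ ≤
      F x - α * (γ₁ ^ 2 / (2 * γ₂)) * ‖F' x‖ ^ 2 + α * β * ∫ ω, ‖g ω‖ ^ 2 ∂μ := by
  have hγ₁ : 0 < γ₁ := hγ₂.trans hγ
  set A : ℝ := ‖F' x‖ ^ 2 with hA
  set C₁ : ℝ := F x - γ₂ * α / 2 * A + γ₁ * α / 2 * A with hC₁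
  set C₃ : ℝ := (γ₁ * α - γ₂ * α) / 2 + L * γ₁ ^ 2 * α ^ 2 / 2 with hC₃
  have hinner_int : Integrable (fun ω => (⟪F' x, g ω⟫ : ℝ)) μ := hint.const_inner (F' x)
  -- pointwise bound
  have hpt : ∀ ω, F (x + p ω) ≤
      C₁ + (-(γ₁ * α)) * ⟪F' x, g ω⟫ + C₃ * ‖g ω‖ ^ 2 := by
    intro ω
    obtain ⟨c, hc1, hc2, hpc⟩ : ∃ c : ℝ, γ₂ * α ≤ c ∧ c ≤ γ₁ * α ∧ p ω = (-c) • g ω := by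
      rw [hp ω]
      split_ifs with h1 h2
      · exact ⟨γ₁ * α, by nlinarith, le_refl _, rfl⟩
      · push_neg at h1
        have hgpos : 0 < ‖g ω‖ := lt_of_lt_of_le (by positivity) h1
        refine ⟨α / ‖g ω‖, ?_, ?_, rfl⟩
        · rw [le_div_iff₀ hgpos]
          calc γ₂ * α * ‖g ω‖ ≤ γ₂ * α * (1 / γ₂) :=
                mul_le_mul_of_nonneg_left h2 (by positivity)
            _ = α := by field_simp
        · rw [div_le_iff₀ hgpos]
          calc α = γ₁ * α * (1 / γ₁) := by field_simp
            _ ≤ γ₁ * α * ‖g ω‖ := mul_le_mul_of_nonneg_left h1 (by positivity)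
      · exact ⟨γ₂ * α, le_refl _, by nlinarith, rfl⟩
    have hdesc := descent_aux_stmt7 F F' L hL.le hgrad hlip x (p ω)
    rw [hpc] at hdesc ⊢
    rw [real_inner_smul_right, norm_smul] at hdesc
    have hnormsq : ‖(-c : ℝ)‖ ^ 2 = c ^ 2 := by
      rw [norm_neg, Real.norm_eq_abs, sq_abs]
    rw [mul_pow, hnormsq] at hdesc
    have h2I : 2 * ⟪F' x, g ω⟫ ≤ A + ‖g ω‖ ^ 2 := by
      have h0 := sq_nonneg ‖F' x - g ω‖
      rw [norm_sub_sq_real] at h0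
      linarith
    have hc0 : 0 < c := lt_of_lt_of_le (by positivity) hc1
    have hg2 : (0:ℝ) ≤ ‖g ω‖ ^ 2 := sq_nonneg _
    rw [hC₁, hC₃]
    nlinarith [mul_le_mul_of_nonneg_left h2I (sub_nonneg.2 hc2),
      mul_nonneg (mul_nonneg hL.le (sub_nonneg.2 hc2))
        (mul_nonneg (by linarith : (0:ℝ) ≤ γ₁ * α + c) hg2)]
  -- integrability pieces
  have i1 : Integrable (fun ω => C₁ + (-(γ₁ * α)) * ⟪F' x, g ω⟫) μ :=
    (integrable_const C₁).add (hinner_int.const_mul _)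
  have i2 : Integrable (fun ω => C₃ * ‖g ω‖ ^ 2) μ := hint2.const_mul _
  have hle : ∫ ω, F (x + p ω) ∂μ ≤
      ∫ ω, (C₁ + (-(γ₁ * α)) * ⟪F' x, g ω⟫ + C₃ * ‖g ω‖ ^ 2) ∂μ :=
    integral_mono hintF (i1.add i2) hpt
  have hIinner : ∫ ω, (⟪F' x, g ω⟫ : ℝ) ∂μ = A := by
    rw [integral_inner hint (F' x), hmean, real_inner_self_eq_norm_sq]
  set S : ℝ := ∫ ω, ‖g ω‖ ^ 2 ∂μ with hS
  have hBval : ∫ ω, (C₁ + (-(γ₁ * α)) * ⟪F' x, g ω⟫ + C₃ * ‖g ω‖ ^ 2) ∂μ =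
      C₁ + (-(γ₁ * α)) * A + C₃ * S := by
    rw [integral_add i1 i2, integral_add (integrable_const C₁) (hinner_int.const_mul _),
      integral_const_mul, integral_const_mul, hIinner, integral_const]
    simp [hS]
  -- S ≥ A
  have hSA : A ≤ S := by
    have j1 : Integrable (fun ω => A - 2 * ⟪F' x, g ω⟫) μ :=
      (integrable_const A).sub (hinner_int.const_mul 2)
    have h0 : 0 ≤ ∫ ω, ((A - 2 * ⟪F' x, g ω⟫) + ‖g ω‖ ^ 2) ∂μ := by
      apply integral_nonneg
      intro ω
      have h1 := sq_nonneg ‖F' x - g ω‖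
      rw [norm_sub_sq_real] at h1
      simp only [Pi.zero_apply]
      linarith
    rw [integral_add j1 hint2,
      integral_sub (integrable_const A) (hinner_int.const_mul 2),
      integral_const_mul, hIinner, integral_const] at h0
    simp at h0
    linarith
  have hA0 : 0 ≤ A := sq_nonneg _
  -- final algebra
  refine hle.trans ?_
  rw [hBval, hβ, ← sub_nonneg, hC₁, hC₃]
  rw [algebra_aux_stmt7 (F x) α γ₁ γ₂ L A S hγ₂.ne']
  apply mul_nonneg (by positivity)
  have h1 : 0 ≤ (γ₁ ^ 2 - γ₁ * γ₂) * (S - A) :=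
    mul_nonneg (by nlinarith) (by linarith)
  nlinarith
end

section
/- Let $F : \mathbb{R}^n \to \mathbb{R}$ be differentiable with $L$-Lipschitz gradient, bounded below by $F_*$, and satisfying the PL condition $\|\nabla F(x)\|^2 \ge 2\mu(F(x) - F_*)$ for some $\mu > 0$. Let $0 < \gamma_2 < \gamma_1$ and $\alpha < \min\{\frac{\gamma_2}{2\gamma_1^2 L}, \frac{1}{\mu\gamma_2}\}$, and let $(x_k)$ be iterates of TRish with stochastic gradients $g_k$ satisfying $\mathbb{E}_k[g_k] = \nabla F(x_k)$ and $\mathbb{E}_k[\|\nabla F(x_k) - g_k\|^2] < M_g$. Then with $\beta = \frac{\gamma_1^2 - \gamma_2^2}{2\gamma_2} + \tfrac{1}{2}\alpha\gamma_1^2 L$, one has $\mathbb{E}[F(x_{k+1})] - F_* \le (1 - \tfrac{1}{2}\alpha\mu\gamma_2)^{k+1}(F(x_0) - F_*) + \frac{2\beta M_g}{\mu\gamma_2}$ for all $k$, hence $\limsup_{k\to\infty} \mathbb{E}[F(x_{k+1})] - F_* \le \frac{2\beta M_g}{\mu\gamma_2}$. -/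
set_option maxHeartbeats 1000000

open MeasureTheory
open scoped RealInnerProductSpace

section TrishAux

variable {E : Type*} [NormedAddCommGroup E] [InnerProductSpace ℝ E] [CompleteSpace E]


lemma trish_descent (F : E → ℝ) (F' : E → E) (L : ℝ) (hL : 0 ≤ L)
    (hgrad : ∀ y, HasGradientAt F (F' y) y)
    (hlipn : ∀ a b, ‖F' a - F' b‖ ≤ L * ‖a - b‖) (y p : E) :
    F (y + p) ≤ F y + ⟪F' y, p⟫ + L / 2 * ‖p‖ ^ 2 := by
  set ψ : ℝ → ℝ := fun t => F (y + t • p) - t * ⟪F' y, p⟫ - L / 2 * t ^ 2 * ‖p‖ ^ 2 with hψ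
  have hc : ∀ t : ℝ, HasDerivAt (fun s : ℝ => y + s • p) p t := by
    intro t
    simpa using ((hasDerivAt_id t).smul_const p).const_add y
  have hF : ∀ t : ℝ, HasDerivAt (fun s : ℝ => F (y + s • p)) ⟪F' (y + t • p), p⟫ t := by
    intro t
    have h1 : HasFDerivAt F (InnerProductSpace.toDual ℝ E (F' (y + t • p))) (y + t • p) :=
      (hasGradientAt_iff_hasFDerivAt).1 (hgrad _)
    have := h1.comp_hasDerivAt t (hc t)
    simp only [InnerProductSpace.toDual_apply_apply] at this
    exact this
  have hψd : ∀ t : ℝ, HasDerivAt ψ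
      (⟪F' (y + t • p), p⟫ - ⟪F' y, p⟫ - L * t * ‖p‖ ^ 2) t := by
    intro t
    have h2 : HasDerivAt (fun t : ℝ => t * ⟪F' y, p⟫) ⟪F' y, p⟫ t := by
      simpa using (hasDerivAt_id t).mul_const ⟪F' y, p⟫
    have h3 : HasDerivAt (fun t : ℝ => L / 2 * t ^ 2 * ‖p‖ ^ 2) (L * t * ‖p‖ ^ 2) t := by
      have := ((hasDerivAt_pow 2 t).const_mul (L / 2)).mul_const (‖p‖ ^ 2)
      refine this.congr_deriv ?_
      ring
    exact ((hF t).sub h2).sub h3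
  have hanti : AntitoneOn ψ (Set.Icc 0 1) := by
    apply antitoneOn_of_deriv_nonpos (convex_Icc 0 1)
    · exact (fun t _ => ((hψd t).differentiableAt).continuousAt.continuousWithinAt)
    · intro t ht
      exact ((hψd t).differentiableAt).differentiableWithinAt
    · intro t ht
      rw [interior_Icc] at ht
      rw [(hψd t).deriv]
      have h4 : ⟪F' (y + t • p) - F' y, p⟫ ≤ ‖F' (y + t • p) - F' y‖ * ‖p‖ :=
        real_inner_le_norm _ _
      have h5 : ‖F' (y + t • p) - F' y‖ ≤ L * (t * ‖p‖) := by
        have := hlipn (y + t • p) y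
        simpa [norm_smul, abs_of_nonneg ht.1.le] using this
      have h6 : ⟪F' (y + t • p), p⟫ - ⟪F' y, p⟫ = ⟪F' (y + t • p) - F' y, p⟫ := by
        rw [inner_sub_left]
      have hp : (0:ℝ) ≤ ‖p‖ := norm_nonneg p
      nlinarith [mul_le_mul_of_nonneg_right h5 hp]
  have := hanti (Set.mem_Icc.2 ⟨le_refl 0, zero_le_one⟩) (Set.mem_Icc.2 ⟨zero_le_one, le_refl 1⟩) zero_le_one
  simp only [hψ] at this
  norm_num at this
  linarith [this]


lemma trish_quad (A B c D β₀ γ₂ a b s : ℝ) (hγ₂ : 0 < γ₂)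
    (hA : A ≤ -γ₂ / 4) (hB : B ≤ -β₀) (h4 : |c| ≤ D) (hD : 0 ≤ D)
    (h5 : D ^ 2 ≤ γ₂ * β₀) (ha : 0 ≤ a) (hb : 0 ≤ b) (hs : |s| ≤ a * b) :
    A * a ^ 2 + c * s + B * b ^ 2 ≤ 0 := by
  have h6 : c * s ≤ D * (a * b) := by
    calc c * s ≤ |c * s| := le_abs_self _
    _ = |c| * |s| := abs_mul _ _
    _ ≤ D * (a * b) := mul_le_mul h4 hs (abs_nonneg _) hD
  have h7' : γ₂ * (D * (a * b)) ≤ γ₂ * (γ₂ / 4 * a ^ 2 + β₀ * b ^ 2) := by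
    nlinarith [sq_nonneg (γ₂ * a - 2 * D * b), mul_le_mul_of_nonneg_right h5 (sq_nonneg b)]
  have h7 : D * (a * b) ≤ γ₂ / 4 * a ^ 2 + β₀ * b ^ 2 := (mul_le_mul_iff_right₀ hγ₂).1 h7'
  have h8 := mul_le_mul_of_nonneg_right hA (sq_nonneg a)
  have h9 := mul_le_mul_of_nonneg_right hB (sq_nonneg b)
  nlinarith [h6, h7, h8, h9]

lemma trish_core (L α γ₁ γ₂ β θ a b s : ℝ)
    (hL : 0 < L) (hα : 0 < α) (hγ₂ : 0 < γ₂) (hγ : γ₂ < γ₁)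
    (hLα : L * α * (2 * γ₁ ^ 2) ≤ γ₂)
    (hβ : β = (γ₁ ^ 2 - γ₂ ^ 2) / (2 * γ₂) + (1 / 2) * α * γ₁ ^ 2 * L)
    (hθ1 : γ₂ ≤ θ) (hθ2 : θ ≤ γ₁) (ha : 0 ≤ a) (hb : 0 ≤ b) (hs : |s| ≤ a * b) :
    (-θ + L * θ ^ 2 * α / 2 + γ₂ / 2) * a ^ 2
      + ((γ₁ + γ₂) / 2 - L * α * (γ₁ ^ 2 + γ₂ ^ 2) / 2 - θ + L * α * θ ^ 2) * s
      + (L * θ ^ 2 * α / 2 - β) * b ^ 2 ≤ 0 := by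
  have hγ₁ : 0 < γ₁ := lt_trans hγ₂ hγ
  have hθ0 : 0 < θ := lt_of_lt_of_le hγ₂ hθ1
  have hLα0 : 0 < L * α := mul_pos hL hα
  have hsq1 : θ ^ 2 ≤ γ₁ ^ 2 := by nlinarith
  have hsq2 : γ₂ ^ 2 ≤ θ ^ 2 := by nlinarith
  have hsq3 : (0:ℝ) ≤ γ₁ ^ 2 - γ₂ ^ 2 := by nlinarith
  have hLαθ : L * α * θ ≤ 1 / 2 := by nlinarith
  have h2 : -θ + L * θ ^ 2 * α / 2 + γ₂ / 2 ≤ -γ₂ / 4 := by nlinarith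
  have h3 : L * θ ^ 2 * α / 2 - β ≤ -((γ₁ ^ 2 - γ₂ ^ 2) / (2 * γ₂)) := by
    rw [hβ]
    nlinarith [mul_le_mul_of_nonneg_left hsq1 hLα0.le]
  have hDnn : (0:ℝ) ≤ (γ₁ - γ₂) / 2 + L * α * (γ₁ ^ 2 - γ₂ ^ 2) / 2 := by
    linarith [mul_nonneg hLα0.le hsq3]
  have h4 : |(γ₁ + γ₂) / 2 - L * α * (γ₁ ^ 2 + γ₂ ^ 2) / 2 - θ + L * α * θ ^ 2|
      ≤ (γ₁ - γ₂) / 2 + L * α * (γ₁ ^ 2 - γ₂ ^ 2) / 2 := by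
    rw [abs_le]
    constructor
    · nlinarith [mul_le_mul_of_nonneg_left hsq1 hLα0.le, mul_le_mul_of_nonneg_left hsq2 hLα0.le]
    · nlinarith [mul_le_mul_of_nonneg_left hsq1 hLα0.le, mul_le_mul_of_nonneg_left hsq2 hLα0.le]
  have h5 : ((γ₁ - γ₂) / 2 + L * α * (γ₁ ^ 2 - γ₂ ^ 2) / 2) ^ 2
      ≤ γ₂ * ((γ₁ ^ 2 - γ₂ ^ 2) / (2 * γ₂)) := by
    have key : L * α * (γ₁ * (γ₁ + γ₂)) ≤ γ₂ := by nlinarith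
    have hDle : (γ₁ - γ₂) / 2 + L * α * (γ₁ ^ 2 - γ₂ ^ 2) / 2
        ≤ (γ₁ ^ 2 - γ₂ ^ 2) / (2 * γ₁) := by
      rw [le_div_iff₀ (by positivity)]
      nlinarith [mul_le_mul_of_nonneg_right key (by linarith : (0:ℝ) ≤ γ₁ - γ₂)]
    have h52 : γ₂ * ((γ₁ ^ 2 - γ₂ ^ 2) / (2 * γ₂)) = (γ₁ ^ 2 - γ₂ ^ 2) / 2 := by
      field_simp
    have h51 := pow_le_pow_left₀ hDnn hDle 2
    rw [h52]
    have h53 : ((γ₁ ^ 2 - γ₂ ^ 2) / (2 * γ₁)) ^ 2 ≤ (γ₁ ^ 2 - γ₂ ^ 2) / 2 := by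
      rw [div_pow, div_le_div_iff₀ (by positivity) (by norm_num)]
      nlinarith
    linarith
  exact trish_quad _ _ _ _ _ γ₂ a b s hγ₂ h2 h3 h4 hDnn h5 ha hb hs


lemma trish_key (L α γ₁ γ₂ β θ : ℝ)
    (hL : 0 < L) (hα : 0 < α) (hγ₂ : 0 < γ₂) (hγ : γ₂ < γ₁)
    (hLα : L * α * (2 * γ₁ ^ 2) ≤ γ₂)
    (hβ : β = (γ₁ ^ 2 - γ₂ ^ 2) / (2 * γ₂) + (1 / 2) * α * γ₁ ^ 2 * L)
    (hθ1 : γ₂ ≤ θ) (hθ2 : θ ≤ γ₁) (f g : E) :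
    -(θ * α) * ⟪f, g⟫ + L / 2 * (θ * α) ^ 2 * ‖g‖ ^ 2
      ≤ ((γ₁ + γ₂) / 2 - L * α * (γ₁ ^ 2 + γ₂ ^ 2) / 2) * α * (‖f‖ ^ 2 - ⟪f, g⟫)
        - γ₂ * α / 2 * ‖f‖ ^ 2 + α * β * ‖f - g‖ ^ 2 := by
  have e1 : ⟪f, g⟫ = ‖f‖ ^ 2 + ⟪f, g - f⟫ := by
    rw [← real_inner_self_eq_norm_sq, ← inner_add_right, add_sub_cancel]
  have e2 : ‖g‖ ^ 2 = ‖f‖ ^ 2 + 2 * ⟪f, g - f⟫ + ‖f - g‖ ^ 2 := by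
    have := norm_add_sq_real f (g - f)
    rw [add_sub_cancel] at this
    rw [this, norm_sub_rev]
  have hs : |⟪f, g - f⟫| ≤ ‖f‖ * ‖f - g‖ := by
    rw [norm_sub_rev f g]
    exact abs_real_inner_le_norm f (g - f)
  have core := trish_core L α γ₁ γ₂ β θ ‖f‖ ‖f - g‖ ⟪f, g - f⟫ hL hα hγ₂ hγ hLα hβ hθ1 hθ2
    (norm_nonneg f) (norm_nonneg _) hs
  have hc := mul_le_mul_of_nonneg_left core hα.le
  rw [e1, e2]
  nlinarith [hc]

end TrishAux


lemma coord_abs_le_norm {n : ℕ} (u : EuclideanSpace ℝ (Fin n)) (i : Fin n) : |u i| ≤ ‖u‖ := by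
  rw [EuclideanSpace.norm_eq, show |u i| = Real.sqrt (|u i| ^ 2) by
    rw [Real.sqrt_sq_eq_abs, abs_abs]]
  apply Real.sqrt_le_sqrt
  have := Finset.single_le_sum (f := fun j => ‖u j‖ ^ 2)
    (fun j _ => sq_nonneg _) (Finset.mem_univ i)
  simpa [Real.norm_eq_abs] using this

theorem stmt_11 {n : ℕ} (F : EuclideanSpace ℝ (Fin n) → ℝ)
    (F' : EuclideanSpace ℝ (Fin n) → EuclideanSpace ℝ (Fin n))
    (L Fstar μpl : ℝ) (hL : 0 < L) (hμ : 0 < μpl)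
    (hgrad : ∀ y, HasGradientAt F (F' y) y)
    (hlip : LipschitzWith (Real.toNNReal L) F')
    (hbdd : ∀ y, Fstar ≤ F y)
    (hPL : ∀ y, ‖F' y‖ ^ 2 ≥ 2 * μpl * (F y - Fstar))
    (α γ₁ γ₂ β Mg : ℝ) (hα : 0 < α) (hγ₂ : 0 < γ₂) (hγ : γ₂ < γ₁) (hMg : 0 < Mg)
    (hαlt : α < min (γ₂ / (2 * γ₁ ^ 2 * L)) (1 / (μpl * γ₂)))
    (hβ : β = (γ₁ ^ 2 - γ₂ ^ 2) / (2 * γ₂) + (1 / 2) * α * γ₁ ^ 2 * L)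
    {Ω : Type*} {m0 : MeasurableSpace Ω} (μ : Measure Ω) [IsProbabilityMeasure μ]
    (ℱ : Filtration ℕ m0)
    (x g : ℕ → Ω → EuclideanSpace ℝ (Fin n))
    (x₀ : EuclideanSpace ℝ (Fin n)) (hx₀ : ∀ ω, x 0 ω = x₀)
    (hadapted : Adapted ℱ x)
    (hstep : ∀ k ω, x (k + 1) ω = x k ω +
      (if ‖g k ω‖ < 1 / γ₁ then (-(γ₁ * α)) • g k ω
       else if ‖g k ω‖ ≤ 1 / γ₂ then (-(α / ‖g k ω‖)) • g k ω
       else (-(γ₂ * α)) • g k ω))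
    (hintg : ∀ k, Integrable (g k) μ)
    (hintF : ∀ k, Integrable (fun ω => F (x k ω)) μ)
    (hint2 : ∀ k, Integrable (fun ω => ‖F' (x k ω) - g k ω‖ ^ 2) μ)
    (hunbiased : ∀ k, μ[g k | ℱ k] =ᵐ[μ] fun ω => F' (x k ω))
    (hvar : ∀ k, ∀ᵐ ω ∂μ, (μ[fun ω' => ‖F' (x k ω') - g k ω'‖ ^ 2 | ℱ k]) ω < Mg) :
    (∀ k : ℕ, (∫ ω, F (x (k + 1) ω) ∂μ) - Fstar ≤
        (1 - (1 / 2) * α * μpl * γ₂) ^ (k + 1) * (F x₀ - Fstar)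
          + 2 * β * Mg / (μpl * γ₂)) ∧
      Filter.limsup (fun k => (∫ ω, F (x (k + 1) ω) ∂μ) - Fstar) Filter.atTop ≤
        2 * β * Mg / (μpl * γ₂) := by
  classical
  have hγ₁ : 0 < γ₁ := hγ₂.trans hγ
  have hα1 : α < γ₂ / (2 * γ₁ ^ 2 * L) := (lt_min_iff.1 hαlt).1
  have hα2 : α < 1 / (μpl * γ₂) := (lt_min_iff.1 hαlt).2
  have hLα : L * α * (2 * γ₁ ^ 2) ≤ γ₂ := by
    rw [lt_div_iff₀ (by positivity)] at hα1; nlinarith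
  have hlipn : ∀ a b : EuclideanSpace ℝ (Fin n), ‖F' a - F' b‖ ≤ L * ‖a - b‖ := by
    intro a b
    have h := hlip.dist_le_mul a b
    rwa [dist_eq_norm, dist_eq_norm, Real.coe_toNNReal L hL.le] at h
  have hβpos : 0 < β := by
    have h1 : 0 < (γ₁ ^ 2 - γ₂ ^ 2) / (2 * γ₂) := by
      apply div_pos (by nlinarith) (by positivity)
    have h2 : 0 < (1:ℝ) / 2 * α * γ₁ ^ 2 * L := by positivity
    rw [hβ]; linarith
  set θb : ℝ := (γ₁ + γ₂) / 2 - L * α * (γ₁ ^ 2 + γ₂ ^ 2) / 2 with hθb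
  -- pointwise inequality
  have hpt : ∀ k ω, F (x (k+1) ω) ≤ F (x k ω)
      + θb * α * (‖F' (x k ω)‖ ^ 2 - ⟪F' (x k ω), g k ω⟫)
      - γ₂ * α / 2 * ‖F' (x k ω)‖ ^ 2 + α * β * ‖F' (x k ω) - g k ω‖ ^ 2 := by
    have huni : ∀ θ : ℝ, γ₂ ≤ θ → θ ≤ γ₁ → ∀ (y gv : EuclideanSpace ℝ (Fin n)),
        F (y + (-(θ * α)) • gv) ≤ F y + θb * α * (‖F' y‖ ^ 2 - ⟪F' y, gv⟫)
          - γ₂ * α / 2 * ‖F' y‖ ^ 2 + α * β * ‖F' y - gv‖ ^ 2 := by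
      intro θ h1 h2 y gv
      have hθ0 : 0 < θ := lt_of_lt_of_le hγ₂ h1
      have hd := trish_descent F F' L hL.le hgrad hlipn y ((-(θ * α)) • gv)
      have hk := trish_key L α γ₁ γ₂ β θ hL hα hγ₂ hγ hLα hβ h1 h2 (F' y) gv
      have e1 : ⟪F' y, (-(θ * α)) • gv⟫ = -(θ * α) * ⟪F' y, gv⟫ :=
        real_inner_smul_right _ _ _
      have e2 : ‖(-(θ * α)) • gv‖ ^ 2 = (θ * α) ^ 2 * ‖gv‖ ^ 2 := by
        rw [norm_smul]
        rw [Real.norm_eq_abs, abs_neg, abs_of_nonneg (by positivity : (0:ℝ) ≤ θ * α)]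
        ring
      rw [e1, e2] at hd
      calc F (y + (-(θ * α)) • gv) ≤ F y + (-(θ * α) * ⟪F' y, gv⟫ + L / 2 * ((θ * α) ^ 2 * ‖gv‖ ^ 2)) := by linarith
      _ ≤ _ := by
        have : L / 2 * ((θ * α) ^ 2 * ‖gv‖ ^ 2) = L / 2 * (θ * α) ^ 2 * ‖gv‖ ^ 2 := by ring
        rw [this, hθb]
        linarith [hk]
    intro k ω
    rw [hstep k ω]
    split_ifs with h1 h2
    · exact huni γ₁ hγ.le le_rfl _ _
    · push_neg at h1
      have hgpos : 0 < ‖g k ω‖ := lt_of_lt_of_le (by positivity) h1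
      have hco : -(α / ‖g k ω‖) = -((1 / ‖g k ω‖) * α) := by ring
      rw [hco]
      apply huni (1 / ‖g k ω‖)
      · rw [le_div_iff₀ hgpos]
        calc γ₂ * ‖g k ω‖ ≤ γ₂ * (1 / γ₂) := by
              apply mul_le_mul_of_nonneg_left h2 hγ₂.le
        _ = 1 := by field_simp
      · rw [div_le_iff₀ hgpos]
        calc (1:ℝ) = γ₁ * (1 / γ₁) := by field_simp
        _ ≤ γ₁ * ‖g k ω‖ := mul_le_mul_of_nonneg_left h1 hγ₁.le
    · exact huni γ₂ le_rfl hγ.le _ _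
  -- measurability facts
  have hg_aesm : ∀ k, AEStronglyMeasurable (g k) μ := fun k => (hintg k).aestronglyMeasurable
  have hf_sm : ∀ k, StronglyMeasurable[ℱ k] (fun ω => F' (x k ω)) := fun k =>
    hlip.continuous.comp_stronglyMeasurable (hadapted k).stronglyMeasurable
  have hf_aesm : ∀ k, AEStronglyMeasurable (fun ω => F' (x k ω)) μ := fun k =>
    ((hf_sm k).mono (ℱ.le k)).aestronglyMeasurable
  have hfnorm : ∀ y : EuclideanSpace ℝ (Fin n), ‖F' y‖ ≤ ‖F' 0‖ + L * ‖y‖ := by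
    intro y
    have h1 := hlipn y 0
    have h2 := norm_sub_norm_le (F' y) (F' 0)
    simp only [sub_zero] at h1
    linarith
  have hx2 : ∀ k, MemLp (x k) 2 μ := by
    intro k
    induction k with
    | zero =>
      have hxx : x 0 = fun _ => x₀ := funext hx₀
      rw [hxx]; exact memLp_const x₀
    | succ k ih =>
      have hf2 : MemLp (fun ω => F' (x k ω)) 2 μ := by
        apply MemLp.of_le ((memLp_const ‖F' 0‖).add (ih.norm.const_mul L)) (hf_aesm k)
        apply Filter.Eventually.of_forall; intro ω
        calc ‖F' (x k ω)‖ ≤ ‖F' 0‖ + L * ‖x k ω‖ := hfnorm _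
        _ ≤ ‖‖F' 0‖ + L * ‖x k ω‖‖ := le_abs_self _
      have hd2 : MemLp (fun ω => F' (x k ω) - g k ω) 2 μ :=
        (memLp_two_iff_integrable_sq_norm ((hf_aesm k).sub (hg_aesm k))).2 (hint2 k)
      have hg2 : MemLp (g k) 2 μ := by
        have h := hf2.sub hd2
        have he : ((fun ω => F' (x k ω)) - fun ω => F' (x k ω) - g k ω) = g k := by
          funext ω; simp
        rwa [he] at h
      set p : Ω → EuclideanSpace ℝ (Fin n) := fun ω =>
        (if ‖g k ω‖ < 1 / γ₁ then (-(γ₁ * α)) • g k ω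
         else if ‖g k ω‖ ≤ 1 / γ₂ then (-(α / ‖g k ω‖)) • g k ω
         else (-(γ₂ * α)) • g k ω) with hp
      have hΦ : Measurable (fun v : EuclideanSpace ℝ (Fin n) =>
          if ‖v‖ < 1 / γ₁ then (-(γ₁ * α)) • v
          else if ‖v‖ ≤ 1 / γ₂ then (-(α / ‖v‖)) • v
          else (-(γ₂ * α)) • v) := by
        apply Measurable.ite (measurableSet_lt measurable_norm measurable_const)
        · fun_prop
        apply Measurable.ite (measurableSet_le measurable_norm measurable_const)
        · exact ((measurable_const.div measurable_norm).neg).smul measurable_id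
        · fun_prop
      have hp_aesm : AEStronglyMeasurable p μ := by
        have := hΦ.comp_aemeasurable (hg_aesm k).aemeasurable
        exact this.aestronglyMeasurable
      have hpbound : ∀ ω, ‖p ω‖ ≤ γ₁ * α * ‖g k ω‖ := by
        intro ω
        simp only [hp]
        split_ifs with h1 h2
        · rw [norm_smul, Real.norm_eq_abs, abs_neg, abs_of_nonneg (by positivity : (0:ℝ) ≤ γ₁ * α)]
        · push_neg at h1
          have hgpos : 0 < ‖g k ω‖ := lt_of_lt_of_le (by positivity) h1
          rw [norm_smul, Real.norm_eq_abs, abs_neg, abs_of_nonneg (by positivity : (0:ℝ) ≤ α / ‖g k ω‖)]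
          rw [div_mul_cancel₀ α hgpos.ne']
          calc α = γ₁ * α * (1 / γ₁) := by field_simp
          _ ≤ γ₁ * α * ‖g k ω‖ := by
            apply mul_le_mul_of_nonneg_left h1 (by positivity)
        · rw [norm_smul, Real.norm_eq_abs, abs_neg, abs_of_nonneg (by positivity : (0:ℝ) ≤ γ₂ * α)]
          exact mul_le_mul_of_nonneg_right (by nlinarith : γ₂ * α ≤ γ₁ * α) (norm_nonneg _)
      have hp2 : MemLp p 2 μ := by
        apply MemLp.of_le (hg2.norm.const_mul (γ₁ * α)) hp_aesm
        apply Filter.Eventually.of_forall; intro ω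
        calc ‖p ω‖ ≤ γ₁ * α * ‖g k ω‖ := hpbound ω
        _ ≤ ‖γ₁ * α * ‖g k ω‖‖ := le_abs_self _
      have hxe : x (k+1) = fun ω => x k ω + p ω := funext fun ω => hstep k ω
      rw [hxe]
      exact ih.add hp2
  -- recursion inequality
  have hrec : ∀ k, (∫ ω, F (x (k + 1) ω) ∂μ) - Fstar ≤
      (1 - α * μpl * γ₂) * ((∫ ω, F (x k ω) ∂μ) - Fstar) + α * β * Mg := by
    intro k
    have hm : (ℱ k : MeasurableSpace Ω) ≤ m0 := ℱ.le k
    haveI : SigmaFinite (μ.trim hm) := by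
      haveI : IsFiniteMeasure (μ.trim hm) := isFiniteMeasure_trim hm
      infer_instance
    set fk : Ω → EuclideanSpace ℝ (Fin n) := fun ω => F' (x k ω) with hfk
    have hf2 : MemLp fk 2 μ := by
      apply MemLp.of_le ((memLp_const ‖F' 0‖).add ((hx2 k).norm.const_mul L)) (hf_aesm k)
      apply Filter.Eventually.of_forall; intro ω
      calc ‖fk ω‖ ≤ ‖F' 0‖ + L * ‖x k ω‖ := hfnorm _
      _ ≤ ‖‖F' 0‖ + L * ‖x k ω‖‖ := le_abs_self _
    have hd2 : MemLp (fun ω => fk ω - g k ω) 2 μ :=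
      (memLp_two_iff_integrable_sq_norm ((hf_aesm k).sub (hg_aesm k))).2 (hint2 k)
    have hg2 : MemLp (g k) 2 μ := by
      have h := hf2.sub hd2
      have he : (fk - fun ω => fk ω - g k ω) = g k := by funext ω; simp
      rwa [he] at h
    have int_f2 : Integrable (fun ω => ‖fk ω‖ ^ 2) μ :=
      (memLp_two_iff_integrable_sq_norm (hf_aesm k)).1 hf2
    have int_g2 : Integrable (fun ω => ‖g k ω‖ ^ 2) μ :=
      (memLp_two_iff_integrable_sq_norm (hg_aesm k)).1 hg2
    have hdom : Integrable (fun ω => 1/2 * (‖fk ω‖ ^ 2 + ‖g k ω‖ ^ 2)) μ :=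
      (int_f2.add int_g2).const_mul (1/2 : ℝ)
    have int_inner : Integrable (fun ω => ⟪fk ω, g k ω⟫) μ := by
      apply Integrable.mono' hdom ((hf_aesm k).inner (hg_aesm k))
      apply Filter.Eventually.of_forall; intro ω
      rw [Real.norm_eq_abs]
      calc |⟪fk ω, g k ω⟫| ≤ ‖fk ω‖ * ‖g k ω‖ := abs_real_inner_le_norm _ _
      _ ≤ 1/2 * (‖fk ω‖ ^ 2 + ‖g k ω‖ ^ 2) := by nlinarith [sq_nonneg (‖fk ω‖ - ‖g k ω‖)]
    -- E[⟪f,g⟫] = E[‖f‖²]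
    have hEinner : ∫ ω, ⟪fk ω, g k ω⟫ ∂μ = ∫ ω, ‖fk ω‖ ^ 2 ∂μ := by
      have hfi_sm : ∀ i : Fin n, StronglyMeasurable[ℱ k] (fun ω => fk ω i) := fun i =>
        (EuclideanSpace.proj i (𝕜 := ℝ)).continuous.comp_stronglyMeasurable (hf_sm k)
      have hfi_aesm : ∀ i : Fin n, AEStronglyMeasurable (fun ω => fk ω i) μ := fun i =>
        ((hfi_sm i).mono hm).aestronglyMeasurable
      have hgi_aesm : ∀ i : Fin n, AEStronglyMeasurable (fun ω => g k ω i) μ := fun i =>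
        (EuclideanSpace.proj i (𝕜 := ℝ)).continuous.comp_aestronglyMeasurable (hg_aesm k)
      have int_fg_i : ∀ i : Fin n, Integrable (fun ω => fk ω i * g k ω i) μ := by
        intro i
        apply Integrable.mono' hdom ((hfi_aesm i).mul (hgi_aesm i))
        apply Filter.Eventually.of_forall; intro ω
        simp only [Pi.mul_apply, Real.norm_eq_abs, abs_mul]
        calc |fk ω i| * |g k ω i| ≤ ‖fk ω‖ * ‖g k ω‖ := by
              apply mul_le_mul (coord_abs_le_norm _ _) (coord_abs_le_norm _ _)
                (abs_nonneg _) (norm_nonneg _)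
        _ ≤ 1/2 * (‖fk ω‖ ^ 2 + ‖g k ω‖ ^ 2) := by nlinarith [sq_nonneg (‖fk ω‖ - ‖g k ω‖)]
      have int_ff_i : ∀ i : Fin n, Integrable (fun ω => fk ω i * fk ω i) μ := by
        intro i
        apply Integrable.mono' int_f2 ((hfi_aesm i).mul (hfi_aesm i))
        apply Filter.Eventually.of_forall; intro ω
        simp only [Pi.mul_apply, Real.norm_eq_abs, abs_mul]
        calc |fk ω i| * |fk ω i| ≤ ‖fk ω‖ * ‖fk ω‖ := by
              apply mul_le_mul (coord_abs_le_norm _ _) (coord_abs_le_norm _ _)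
                (abs_nonneg _) (norm_nonneg _)
        _ = ‖fk ω‖ ^ 2 := by ring
      have hcoord : ∀ i : Fin n, ∫ ω, fk ω i * g k ω i ∂μ = ∫ ω, fk ω i * fk ω i ∂μ := by
        intro i
        have hgi_int : Integrable (fun ω => g k ω i) μ :=
          (EuclideanSpace.proj i (𝕜 := ℝ)).integrable_comp (hintg k)
        have hfk_int : Integrable fk μ := hf2.integrable one_le_two
        have hfi_int : Integrable (fun ω => fk ω i) μ :=
          (EuclideanSpace.proj i (𝕜 := ℝ)).integrable_comp hfk_int
        have hgi_cond : (fun ω => fk ω i) =ᵐ[μ] μ[(fun ω => g k ω i)|ℱ k] := by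
          apply ae_eq_condExp_of_forall_setIntegral_eq hm hgi_int
          · intro s _ _; exact hfi_int.integrableOn
          · intro s hs _
            have e1 : ∫ ω in s, g k ω i ∂μ = (∫ ω in s, g k ω ∂μ) i :=
              (EuclideanSpace.proj i (𝕜 := ℝ)).integral_comp_comm (hintg k).integrableOn
            have e2 : ∫ ω in s, fk ω i ∂μ = (∫ ω in s, fk ω ∂μ) i :=
              (EuclideanSpace.proj i (𝕜 := ℝ)).integral_comp_comm hfk_int.integrableOn
            have e3 : ∫ ω in s, g k ω ∂μ = ∫ ω in s, fk ω ∂μ := by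
              rw [← setIntegral_condExp hm (hintg k) hs]
              exact integral_congr_ae (ae_restrict_of_ae (hunbiased k))
            rw [e1, e2, e3]
          · exact (hfi_sm i).aestronglyMeasurable
        have hmul : μ[(fun ω => fk ω i) * (fun ω => g k ω i)|ℱ k]
            =ᵐ[μ] (fun ω => fk ω i) * μ[(fun ω => g k ω i)|ℱ k] :=
          condExp_mul_of_stronglyMeasurable_left (hfi_sm i) (int_fg_i i) hgi_int
        have hmul' : μ[(fun ω => fk ω i * g k ω i)|ℱ k]
            =ᵐ[μ] (fun ω => fk ω i) * μ[(fun ω => g k ω i)|ℱ k] := hmul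
        have hint_ce := integral_condExp (μ := μ) (f := fun ω => fk ω i * g k ω i) hm
        have h1 : ∫ ω, fk ω i * g k ω i ∂μ
            = ∫ ω, ((fun ω => fk ω i) * μ[(fun ω => g k ω i)|ℱ k]) ω ∂μ := by
          rw [← hint_ce]
          exact integral_congr_ae hmul'
        rw [h1]
        apply integral_congr_ae
        filter_upwards [hgi_cond] with ω hω
        simp only [Pi.mul_apply]
        rw [← hω]
      have hptwise1 : ∀ ω, ⟪fk ω, g k ω⟫ = ∑ i : Fin n, fk ω i * g k ω i := by
        intro ω
        rw [PiLp.inner_apply]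
        simp [RCLike.inner_apply, conj_trivial]
        exact Finset.sum_congr rfl (fun _ _ => mul_comm _ _)
      have hptwise2 : ∀ ω, ‖fk ω‖ ^ 2 = ∑ i : Fin n, fk ω i * fk ω i := by
        intro ω
        rw [← real_inner_self_eq_norm_sq, PiLp.inner_apply]
        simp [RCLike.inner_apply, conj_trivial]
        exact Finset.sum_congr rfl (fun _ _ => sq _)
      calc ∫ ω, ⟪fk ω, g k ω⟫ ∂μ = ∫ ω, ∑ i : Fin n, fk ω i * g k ω i ∂μ := by
            apply integral_congr_ae; apply Filter.Eventually.of_forall; intro ω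
            exact hptwise1 ω
      _ = ∑ i : Fin n, ∫ ω, fk ω i * g k ω i ∂μ :=
            integral_finset_sum Finset.univ (fun i _ => int_fg_i i)
      _ = ∑ i : Fin n, ∫ ω, fk ω i * fk ω i ∂μ := by
            exact Finset.sum_congr rfl (fun i _ => hcoord i)
      _ = ∫ ω, ∑ i : Fin n, fk ω i * fk ω i ∂μ :=
            (integral_finset_sum Finset.univ (fun i _ => int_ff_i i)).symm
      _ = ∫ ω, ‖fk ω‖ ^ 2 ∂μ := by
            apply integral_congr_ae; apply Filter.Eventually.of_forall; intro ω
            exact (hptwise2 ω).symm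
    -- variance bound
    have hvar_int : ∫ ω, ‖fk ω - g k ω‖ ^ 2 ∂μ ≤ Mg := by
      have h1 : ∫ ω, (μ[fun ω' => ‖F' (x k ω') - g k ω'‖ ^ 2|ℱ k]) ω ∂μ
          = ∫ ω, ‖F' (x k ω) - g k ω‖ ^ 2 ∂μ :=
        integral_condExp (μ := μ) (f := fun ω' => ‖F' (x k ω') - g k ω'‖ ^ 2) hm
      have h2 : ∫ ω, (μ[fun ω' => ‖F' (x k ω') - g k ω'‖ ^ 2|ℱ k]) ω ∂μ ≤ ∫ _ω, Mg ∂μ := by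
        apply integral_mono_ae integrable_condExp (integrable_const Mg)
        exact (hvar k).mono (fun ω h => h.le)
      rw [h1] at h2
      simpa [measure_univ] using h2
    -- PL inequality integrated
    have hPLk : 2 * μpl * ((∫ ω, F (x k ω) ∂μ) - Fstar) ≤ ∫ ω, ‖fk ω‖ ^ 2 ∂μ := by
      have h1 : ∫ ω, 2 * μpl * (F (x k ω) - Fstar) ∂μ ≤ ∫ ω, ‖fk ω‖ ^ 2 ∂μ := by
        apply integral_mono (((hintF k).sub (integrable_const Fstar)).const_mul (2 * μpl)) int_f2
        intro ω; exact hPL (x k ω)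
      have h2 : ∫ ω, 2 * μpl * (F (x k ω) - Fstar) ∂μ
          = 2 * μpl * ((∫ ω, F (x k ω) ∂μ) - Fstar) := by
        rw [integral_const_mul, integral_sub (hintF k) (integrable_const Fstar)]
        simp [measure_univ]
      linarith
    -- integrate the pointwise inequality
    have iA : Integrable (fun ω => F (x k ω)) μ := hintF k
    have iB : Integrable (fun ω => θb * α * (‖fk ω‖ ^ 2 - ⟪fk ω, g k ω⟫)) μ :=
      (int_f2.sub int_inner).const_mul _
    have iC : Integrable (fun ω => γ₂ * α / 2 * ‖fk ω‖ ^ 2) μ := int_f2.const_mul _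
    have iD : Integrable (fun ω => α * β * ‖fk ω - g k ω‖ ^ 2) μ := (hint2 k).const_mul _
    have iAB : Integrable (fun ω => F (x k ω)
        + θb * α * (‖fk ω‖ ^ 2 - ⟪fk ω, g k ω⟫)) μ := iA.add iB
    have iABC : Integrable (fun ω => F (x k ω)
        + θb * α * (‖fk ω‖ ^ 2 - ⟪fk ω, g k ω⟫) - γ₂ * α / 2 * ‖fk ω‖ ^ 2) μ := iAB.sub iC
    have int_rhs : Integrable (fun ω => F (x k ω)
        + θb * α * (‖fk ω‖ ^ 2 - ⟪fk ω, g k ω⟫)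
        - γ₂ * α / 2 * ‖fk ω‖ ^ 2 + α * β * ‖fk ω - g k ω‖ ^ 2) μ := iABC.add iD
    have hint_step : ∫ ω, F (x (k+1) ω) ∂μ ≤ ∫ ω, (F (x k ω)
        + θb * α * (‖fk ω‖ ^ 2 - ⟪fk ω, g k ω⟫)
        - γ₂ * α / 2 * ‖fk ω‖ ^ 2 + α * β * ‖fk ω - g k ω‖ ^ 2) ∂μ :=
      integral_mono (hintF (k+1)) int_rhs (fun ω => hpt k ω)
    have hsplit : ∫ ω, (F (x k ω) + θb * α * (‖fk ω‖ ^ 2 - ⟪fk ω, g k ω⟫)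
        - γ₂ * α / 2 * ‖fk ω‖ ^ 2 + α * β * ‖fk ω - g k ω‖ ^ 2) ∂μ
        = (∫ ω, F (x k ω) ∂μ) + θb * α * ((∫ ω, ‖fk ω‖ ^ 2 ∂μ) - ∫ ω, ⟪fk ω, g k ω⟫ ∂μ)
          - γ₂ * α / 2 * ∫ ω, ‖fk ω‖ ^ 2 ∂μ + α * β * ∫ ω, ‖fk ω - g k ω‖ ^ 2 ∂μ := by
      rw [integral_add iABC iD, integral_sub iAB iC, integral_add iA iB]
      rw [integral_const_mul, integral_const_mul, integral_const_mul]
      rw [integral_sub int_f2 int_inner]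
    have hEg : ∫ ω, F (x (k+1) ω) ∂μ ≤ (∫ ω, F (x k ω) ∂μ)
        - γ₂ * α / 2 * ∫ ω, ‖fk ω‖ ^ 2 ∂μ + α * β * Mg := by
      rw [hsplit] at hint_step
      have hz : (∫ ω, ‖fk ω‖ ^ 2 ∂μ) - ∫ ω, ⟪fk ω, g k ω⟫ ∂μ = 0 := by
        rw [hEinner]; ring
      rw [hz, mul_zero] at hint_step
      have hb2 : α * β * ∫ ω, ‖fk ω - g k ω‖ ^ 2 ∂μ ≤ α * β * Mg :=
        mul_le_mul_of_nonneg_left hvar_int (by positivity)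
      linarith
    have hmono := mul_le_mul_of_nonneg_left hPLk (by positivity : (0:ℝ) ≤ γ₂ * α / 2)
    nlinarith [hEg, hmono]
  -- base value
  have hE0 : ∫ ω, F (x 0 ω) ∂μ = F x₀ := by
    simp only [hx₀]
    simp [measure_univ]
  have hnn : ∀ k, 0 ≤ (∫ ω, F (x k ω) ∂μ) - Fstar := by
    intro k
    have h1 : ∫ _ω, Fstar ∂μ ≤ ∫ ω, F (x k ω) ∂μ :=
      integral_mono (integrable_const Fstar) (hintF k) (fun ω => hbdd (x k ω))
    simp only [integral_const, measure_univ, ENNReal.toReal_one, probReal_univ, one_smul, smul_eq_mul, one_mul] at h1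
    linarith
  set c : ℝ := (1/2) * α * μpl * γ₂ with hc
  set B : ℝ := 2 * β * Mg / (μpl * γ₂) with hB
  have hcpos : 0 < c := by rw [hc]; positivity
  have hchalf : c < 1/2 := by
    rw [lt_div_iff₀ (by positivity)] at hα2
    rw [hc]; nlinarith
  have hone : 0 ≤ 1 - c := by linarith
  have hBnn : 0 ≤ B := by
    rw [hB]; positivity
  have hcB : α * β * Mg = c * B := by
    rw [hc, hB]; field_simp
  have hrec' : ∀ k, (∫ ω, F (x (k+1) ω) ∂μ) - Fstar
      ≤ (1 - c) * ((∫ ω, F (x k ω) ∂μ) - Fstar) + c * B := by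
    intro k
    have h1 := hrec k
    have h2 := hnn k
    rw [hcB] at h1
    have h3 : (1 - α * μpl * γ₂) * ((∫ ω, F (x k ω) ∂μ) - Fstar)
        ≤ (1 - c) * ((∫ ω, F (x k ω) ∂μ) - Fstar) := by
      apply mul_le_mul_of_nonneg_right _ h2
      rw [hc]; nlinarith [mul_pos (mul_pos hα hμ) hγ₂]
    linarith
  have hbound : ∀ k, (∫ ω, F (x k ω) ∂μ) - Fstar ≤ (1 - c)^k * (F x₀ - Fstar) + B := by
    intro k
    induction k with
    | zero =>
      rw [hE0]
      simp only [pow_zero, one_mul]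
      linarith [hBnn]
    | succ k ih =>
      calc (∫ ω, F (x (k+1) ω) ∂μ) - Fstar
          ≤ (1 - c) * ((∫ ω, F (x k ω) ∂μ) - Fstar) + c * B := hrec' k
      _ ≤ (1 - c) * ((1 - c)^k * (F x₀ - Fstar) + B) + c * B :=
          add_le_add_left (mul_le_mul_of_nonneg_left ih hone) _
      _ = (1 - c)^(k+1) * (F x₀ - Fstar) + B := by ring
  refine ⟨fun k => hbound (k+1), ?_⟩
  have htend : Filter.Tendsto (fun k : ℕ => (1 - c)^(k+1) * (F x₀ - Fstar) + B)
      Filter.atTop (nhds B) := by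
    have h0 : |1 - c| < 1 := by
      rw [abs_lt]; constructor <;> linarith
    have h1 : Filter.Tendsto (fun k : ℕ => (1 - c)^k) Filter.atTop (nhds 0) :=
      tendsto_pow_atTop_nhds_zero_of_abs_lt_one h0
    have h2 := ((h1.comp (Filter.tendsto_add_atTop_nat 1)).mul_const (F x₀ - Fstar)).add_const B
    simpa using h2
  have hco : Filter.IsCoboundedUnder (· ≤ ·) Filter.atTop
      (fun k => (∫ ω, F (x (k+1) ω) ∂μ) - Fstar) :=
    Filter.isCoboundedUnder_le_of_le Filter.atTop (fun k => hnn (k+1))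
  have hbd : Filter.IsBoundedUnder (· ≤ ·) Filter.atTop
      (fun k : ℕ => (1 - c)^(k+1) * (F x₀ - Fstar) + B) := htend.isBoundedUnder_le
  calc Filter.limsup (fun k => (∫ ω, F (x (k+1) ω) ∂μ) - Fstar) Filter.atTop
      ≤ Filter.limsup (fun k : ℕ => (1 - c)^(k+1) * (F x₀ - Fstar) + B) Filter.atTop :=
        Filter.limsup_le_limsup (Filter.Eventually.of_forall (fun k => hbound (k+1))) hco hbd
  _ = B := htend.limsup_eq
end

section
/- Let $F : \mathbb{R}^n \to \mathbb{R}$ be differentiable with $L$-Lipschitz gradient, bounded below by $F_*$, satisfying the PL condition $\|\nabla F(x)\|^2 \ge 2\mu(F(x)-F_*)$. Let $0 < \gamma_2 < \gamma_1$ with $(\gamma_2/\gamma_1)^2 > 1 - \frac{1}{4M_2}$ and $\alpha < \min\{\frac{1}{4\gamma_2 L M_2}, \frac{2\gamma_2}{\mu\gamma_1^2}\}$. Let $(x_k)$ be TRish iterates with $\mathbb{E}_k[g_k] = \nabla F(x_k)$ and $\mathbb{E}_k[\|g_k\|^2] \le M_2\|\nabla F(x_k)\|^2$. Then $\mathbb{E}[F(x_{k+1})]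 - F_* \le (1 - \alpha\mu\frac{\gamma_1^2}{2\gamma_2})^{k+1}(F(x_0) - F_*)$, so $\mathbb{E}[F(x_k)] \to F_*$ as $k \to \infty$. -/
open MeasureTheory

set_option maxHeartbeats 1000000

section Aux

lemma my_descent {n : ℕ} (F : EuclideanSpace ℝ (Fin n) → ℝ)
    (F' : EuclideanSpace ℝ (Fin n) → EuclideanSpace ℝ (Fin n)) (L : ℝ) (hL : 0 ≤ L)
    (hgrad : ∀ y, HasGradientAt F (F' y) y)
    (hlip : LipschitzWith (Real.toNNReal L) F') (y p : EuclideanSpace ℝ (Fin n)) :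
    F (y + p) ≤ F y + inner ℝ (F' y) p + L / 2 * ‖p‖ ^ 2 := by
  set φ : ℝ → ℝ := fun t => F (y + t • p) - t * inner ℝ (F' y) p - L * t ^ 2 / 2 * ‖p‖ ^ 2 with hφ
  have hd : ∀ t : ℝ, HasDerivAt φ
      ((inner ℝ (F' (y + t • p)) p : ℝ) - inner ℝ (F' y) p - L * t * ‖p‖ ^ 2) t := by
    intro t
    have hc : HasDerivAt (fun t : ℝ => y + t • p) p t := by
      simpa using ((hasDerivAt_id t).smul_const p).const_add y
    have h1 : HasDerivAt (fun t : ℝ => F (y + t • p)) ((inner ℝ (F' (y + t • p)) p : ℝ)) t := by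
      have := ((hgrad (y + t • p)).hasFDerivAt.comp_hasDerivAt t hc)
      simp at this
      exact this
    have h2 : HasDerivAt (fun t : ℝ => t * (inner ℝ (F' y) p : ℝ)) (inner ℝ (F' y) p : ℝ) t := by
      simpa using (hasDerivAt_id t).mul_const (inner ℝ (F' y) p : ℝ)
    have h3 : HasDerivAt (fun t : ℝ => L * t ^ 2 / 2 * ‖p‖ ^ 2) (L * t * ‖p‖ ^ 2) t := by
      have : HasDerivAt (fun t : ℝ => t ^ 2) (2 * t) t := by simpa using hasDerivAt_pow 2 t
      have := (((this.const_mul L).div_const 2).mul_const (‖p‖ ^ 2))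
      rw [show L * t * ‖p‖ ^ 2 = L * (2 * t) / 2 * ‖p‖ ^ 2 by ring]; exact this
    exact (h1.sub h2).sub h3
  have hanti : AntitoneOn φ (Set.Icc (0:ℝ) 1) := by
    apply antitoneOn_of_deriv_nonpos (convex_Icc 0 1)
    · exact fun t _ => (hd t).continuousAt.continuousWithinAt
    · exact fun t _ => (hd t).differentiableAt.differentiableWithinAt
    · intro t ht
      rw [interior_Icc] at ht
      rw [(hd t).deriv]
      have hcs : (inner ℝ (F' (y + t • p)) p : ℝ) - inner ℝ (F' y) p
          = inner ℝ (F' (y + t • p) - F' y) p := by rw [inner_sub_left]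
      have h1 : (inner ℝ (F' (y + t • p) - F' y) p : ℝ) ≤ ‖F' (y + t • p) - F' y‖ * ‖p‖ :=
        real_inner_le_norm _ _
      have h2 : ‖F' (y + t • p) - F' y‖ ≤ L * (t * ‖p‖) := by
        have := hlip.dist_le_mul (y + t • p) y
        rw [dist_eq_norm, dist_eq_norm, show y + t • p - y = t • p by abel] at this
        calc ‖F' (y + t • p) - F' y‖ ≤ Real.toNNReal L * ‖t • p‖ := this
          _ ≤ L * (t * ‖p‖) := by
              rw [norm_smul, Real.coe_toNNReal _ hL, Real.norm_eq_abs,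
                abs_of_nonneg ht.1.le]
      have hp : (0:ℝ) ≤ ‖p‖ := norm_nonneg p
      nlinarith [norm_nonneg (F' (y + t • p) - F' y), ht.1.le]
  have := hanti (Set.left_mem_Icc.2 zero_le_one) (Set.right_mem_Icc.2 zero_le_one) zero_le_one
  simp only [hφ, zero_smul, add_zero, one_smul, zero_mul, sub_zero, zero_pow, mul_zero,
    zero_div, one_pow, mul_one, sub_zero] at this
  linarith

lemma my_condexp_clm {α : Type*} {m m0 : MeasurableSpace α} (hm : m ≤ m0) {μ : Measure α}
    [IsFiniteMeasure μ] {E F : Type*} [NormedAddCommGroup E] [NormedSpace ℝ E] [CompleteSpace E]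
    [NormedAddCommGroup F] [NormedSpace ℝ F] [CompleteSpace F]
    (T : E →L[ℝ] F) {f : α → E} (hf : Integrable f μ) :
    μ[fun ω => T (f ω)|m] =ᵐ[μ] fun ω => T ((μ[f|m]) ω) := by
  refine (ae_eq_condExp_of_forall_setIntegral_eq hm (T.integrable_comp hf)
    (fun s _ _ => (T.integrable_comp integrable_condExp).integrableOn)
    (fun s hs hμs => ?_)
    ((T.continuous.comp_stronglyMeasurable stronglyMeasurable_condExp).aestronglyMeasurable)).symm
  rw [T.integral_comp_comm integrable_condExp.integrableOn,
    T.integral_comp_comm hf.integrableOn, setIntegral_condExp hm hf hs]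

lemma my_coord_abs_le {n : ℕ} (v : EuclideanSpace ℝ (Fin n)) (i : Fin n) : |v i| ≤ ‖v‖ := by
  rw [show |v i| = Real.sqrt ((v i) ^ 2) from (Real.sqrt_sq_eq_abs _).symm,
    EuclideanSpace.norm_eq]
  apply Real.sqrt_le_sqrt
  have := Finset.single_le_sum (f := fun j => ‖v j‖ ^ 2)
    (fun j _ => sq_nonneg _) (Finset.mem_univ i)
  simpa [Real.norm_eq_abs, sq_abs] using this

lemma my_inner_condexp {α : Type*} {m m0 : MeasurableSpace α} (hm : m ≤ m0) {μ : Measure α}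
    [IsProbabilityMeasure μ] {n : ℕ} (h g : α → EuclideanSpace ℝ (Fin n))
    (hhm : StronglyMeasurable[m] h) (hg : Integrable g μ)
    (hh2 : Integrable (fun ω => ‖h ω‖ ^ 2) μ) (hg2 : Integrable (fun ω => ‖g ω‖ ^ 2) μ)
    (hub : μ[g|m] =ᵐ[μ] h) :
    ∫ ω, (inner ℝ (h ω) (g ω) : ℝ) ∂μ = ∫ ω, ‖h ω‖ ^ 2 ∂μ := by
  have hbnd : Integrable (fun ω => (‖h ω‖ ^ 2 + ‖g ω‖ ^ 2) / 2) μ := (hh2.add hg2).div_const 2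
  have hint : ∀ (f : α → EuclideanSpace ℝ (Fin n)), Integrable (fun ω => ‖f ω‖ ^ 2) μ →
      AEStronglyMeasurable f μ → ∀ i,
      Integrable (fun ω => h ω i * f ω i) μ := by
    intro f hf2 hfm i
    apply Integrable.mono' ((hh2.add hf2).div_const 2)
    · exact (((EuclideanSpace.proj i : EuclideanSpace ℝ (Fin n) →L[ℝ] ℝ).continuous.comp_stronglyMeasurable
        hhm).mono hm).aestronglyMeasurable.mul
        (((EuclideanSpace.proj i : EuclideanSpace ℝ (Fin n) →L[ℝ] ℝ).continuous.comp_aestronglyMeasurable hfm))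
    · filter_upwards with ω
      have h1 := my_coord_abs_le (h ω) i
      have h2 := my_coord_abs_le (f ω) i
      have : |h ω i * f ω i| = |h ω i| * |f ω i| := abs_mul _ _
      rw [Real.norm_eq_abs, this]
      simp only [Pi.add_apply]
      nlinarith [mul_le_mul h1 h2 (abs_nonneg _) (norm_nonneg _), sq_nonneg (‖h ω‖ - ‖f ω‖)]
  have key : ∀ i, ∫ ω, h ω i * g ω i ∂μ = ∫ ω, h ω i * h ω i ∂μ := by
    intro i
    have hgi : Integrable (fun ω => g ω i) μ :=
      (EuclideanSpace.proj i : EuclideanSpace ℝ (Fin n) →L[ℝ] ℝ).integrable_comp hg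
    have hfi : StronglyMeasurable[m] (fun ω => h ω i) :=
      (EuclideanSpace.proj i : EuclideanSpace ℝ (Fin n) →L[ℝ] ℝ).continuous.comp_stronglyMeasurable hhm
    have hfg : Integrable (fun ω => h ω i * g ω i) μ := hint g hg2 hg.aestronglyMeasurable i
    have hpull : μ[(fun ω => h ω i) * (fun ω => g ω i)|m]
        =ᵐ[μ] (fun ω => h ω i) * μ[(fun ω => g ω i)|m] :=
      condExp_mul_of_stronglyMeasurable_left hfi hfg hgi
    have hcomp : μ[(fun ω => g ω i)|m] =ᵐ[μ] fun ω => h ω i := by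
      have := my_condexp_clm hm (EuclideanSpace.proj i : EuclideanSpace ℝ (Fin n) →L[ℝ] ℝ) hg
      refine this.trans ?_
      filter_upwards [hub] with ω hω
      simp [hω]
    calc ∫ ω, h ω i * g ω i ∂μ = ∫ ω, (μ[(fun ω => h ω i) * (fun ω => g ω i)|m]) ω ∂μ :=
          (integral_condExp hm).symm
      _ = ∫ ω, h ω i * h ω i ∂μ := by
          apply integral_congr_ae
          filter_upwards [hpull, hcomp] with ω h1 h2
          simp only [h1, Pi.mul_apply, h2]
  have expand : ∀ (f : α → EuclideanSpace ℝ (Fin n)),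
      (∀ ω, (inner ℝ (h ω) (f ω) : ℝ) = ∑ i, h ω i * f ω i) := by
    intro f ω
    simp [PiLp.inner_apply, RCLike.inner_apply, conj_trivial]
    exact Finset.sum_congr rfl fun i _ => mul_comm _ _
  have hsq : ∀ ω, ‖h ω‖ ^ 2 = (inner ℝ (h ω) (h ω) : ℝ) := fun ω =>
    (real_inner_self_eq_norm_sq (h ω)).symm
  calc ∫ ω, (inner ℝ (h ω) (g ω) : ℝ) ∂μ = ∑ i, ∫ ω, h ω i * g ω i ∂μ := by
        rw [← integral_finset_sum _ (fun i _ => hint g hg2 hg.aestronglyMeasurable i)]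
        exact integral_congr_ae (Filter.Eventually.of_forall fun ω => expand g ω)
    _ = ∑ i, ∫ ω, h ω i * h ω i ∂μ := by exact Finset.sum_congr rfl fun i _ => key i
    _ = ∫ ω, ‖h ω‖ ^ 2 ∂μ := by
        rw [← integral_finset_sum _ (fun i _ =>
          hint h hh2 (hhm.mono hm).aestronglyMeasurable i)]
        apply integral_congr_ae
        filter_upwards with ω
        rw [hsq ω, expand h ω]

lemma my_arith (γ₁ γ₂ L α M₂ s : ℝ) (hγ₂ : 0 < γ₂) (hγ : γ₂ < γ₁) (hL : 0 < L) (hα : 0 < α)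
    (hs : 1 ≤ s) (hssq : s ^ 2 = M₂) (hratio : (γ₂ / γ₁) ^ 2 > 1 - 1 / (4 * M₂))
    (hα1 : α < 1 / (4 * γ₂ * L * M₂)) :
    α * (γ₁ ^ 2 / (4 * γ₂)) ≤
      γ₂ * α - (γ₁ - γ₂) * α * s / 2 - ((γ₁ - γ₂) * α / (2 * s) + L / 2 * γ₁ ^ 2 * α ^ 2) * M₂ := by
  have hγ₁ : 0 < γ₁ := hγ₂.trans hγ
  have hs0 : 0 < s := lt_of_lt_of_le one_pos hs
  have hM0 : 0 < M₂ := by nlinarith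
  have h1' : (γ₁ ^ 2 - γ₂ ^ 2) * (4 * s ^ 2) < γ₁ ^ 2 := by
    have h := hratio
    rw [div_pow, gt_iff_lt, sub_lt_iff_lt_add, add_comm] at h
    have h2 : γ₁ ^ 2 * (1 : ℝ) < γ₁ ^ 2 * (1 / (4 * M₂) + γ₂ ^ 2 / γ₁ ^ 2) :=
      (mul_lt_mul_iff_right₀ (by positivity)).2 h
    rw [mul_add, mul_one, mul_div_cancel₀ _ (by positivity : (γ₁:ℝ) ^ 2 ≠ 0)] at h2
    have h3 : γ₁ ^ 2 - γ₂ ^ 2 < γ₁ ^ 2 * (1 / (4 * M₂)) := by linarith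
    rw [hssq] at *
    rw [mul_one_div, lt_div_iff₀ (by positivity)] at h3
    nlinarith
  have hA1 : 4 * s ^ 2 * (γ₁ - γ₂) ≤ γ₁ := by nlinarith [sq_nonneg γ₁, mul_pos hγ₂ hγ₁]
  have hA2 : L * α * (4 * γ₂ * M₂) < 1 := by
    rw [lt_div_iff₀ (by positivity)] at hα1
    nlinarith
  have hr34 : 3 / 4 * γ₁ ^ 2 < γ₂ ^ 2 := by
    have hkey : 0 ≤ (γ₁ ^ 2 - γ₂ ^ 2) * (4 * s ^ 2 - 4) :=
      mul_nonneg (by nlinarith) (by nlinarith)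
    nlinarith
  rw [← sub_nonneg]
  have h8 : (0:ℝ) < 8 * γ₂ * s := by positivity
  have key : 0 ≤ (γ₂ * α - (γ₁ - γ₂) * α * s / 2 -
      ((γ₁ - γ₂) * α / (2 * s) + L / 2 * γ₁ ^ 2 * α ^ 2) * M₂ -
      α * (γ₁ ^ 2 / (4 * γ₂))) * (8 * γ₂ * s) := by
    have hexp : (γ₂ * α - (γ₁ - γ₂) * α * s / 2 -
        ((γ₁ - γ₂) * α / (2 * s) + L / 2 * γ₁ ^ 2 * α ^ 2) * M₂ -
        α * (γ₁ ^ 2 / (4 * γ₂))) * (8 * γ₂ * s)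
        = 8 * γ₂ ^ 2 * α * s - 4 * (γ₁ - γ₂) * α * γ₂ * s ^ 2 - 4 * (γ₁ - γ₂) * α * γ₂ * M₂
          - 4 * L * γ₁ ^ 2 * α ^ 2 * M₂ * γ₂ * s - 2 * α * γ₁ ^ 2 * s := by
      field_simp
      ring
    rw [hexp, ← hssq]
    have hB1 : 4 * (γ₁ - γ₂) * γ₂ * s ≤ γ₁ * γ₂ := by
      have t1 := mul_le_mul_of_nonneg_right hA1 hγ₂.le
      have t2 : 0 ≤ ((γ₁ - γ₂) * γ₂) * (s ^ 2 - s) :=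
        mul_nonneg (mul_nonneg (by linarith) hγ₂.le) (by nlinarith)
      linarith [t1, t2]
    have hB2 : 2 * L * γ₁ ^ 2 * α * γ₂ * s ^ 2 ≤ γ₁ ^ 2 / 2 := by
      rw [← hssq] at hA2
      have := mul_le_mul_of_nonneg_left hA2.le (by positivity : (0:ℝ) ≤ γ₁ ^ 2 / 2)
      linarith [this]
    have hB3 : 0 ≤ 4 * γ₂ ^ 2 - 4 * (γ₁ - γ₂) * γ₂ * s - 2 * L * γ₁ ^ 2 * α * γ₂ * s ^ 2 - γ₁ ^ 2 := by
      nlinarith [hB1, hB2, hr34, mul_pos hγ₁ hγ₂]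
    have hfin := mul_nonneg (mul_nonneg (by linarith : (0:ℝ) ≤ 2 * α) hs0.le) hB3
    linarith [hfin]
  exact nonneg_of_mul_nonneg_right (by linarith [key]) h8

lemma my_step {n : ℕ} (γ₁ γ₂ α s L c₂ Fnext Fcur : ℝ) (hγ₂ : 0 < γ₂) (hγ : γ₂ < γ₁)
    (hα : 0 < α) (hs0 : 0 < s) (hL : 0 ≤ L) (hc2 : (γ₁ - γ₂) * α = 2 * s * c₂)
    (h gg : EuclideanSpace ℝ (Fin n)) (θ : ℝ)
    (hθ1 : γ₂ * α ≤ θ) (hθ2 : θ ≤ γ₁ * α)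
    (hdesc : Fnext ≤ Fcur + inner ℝ h ((-θ) • gg) + L / 2 * ‖(-θ) • gg‖ ^ 2) :
    Fnext ≤ Fcur - γ₂ * α * inner ℝ h gg + (γ₁ - γ₂) * α * s / 2 * ‖h‖ ^ 2 +
      (c₂ + L / 2 * γ₁ ^ 2 * α ^ 2) * ‖gg‖ ^ 2 := by
  have hge : 0 ≤ 2 * s * c₂ := hc2 ▸ mul_nonneg (sub_nonneg.2 hγ.le) hα.le
  have hc2nn : 0 ≤ c₂ := by
    by_contra hcon
    push_neg at hcon
    nlinarith [mul_pos hs0 (neg_pos.2 hcon), hge]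
  set I : ℝ := inner ℝ h gg with hI
  have hin : (inner ℝ h ((-θ) • gg) : ℝ) = -θ * I := by
    rw [real_inner_smul_right]
  have hn : ‖(-θ) • gg‖ ^ 2 = θ ^ 2 * ‖gg‖ ^ 2 := by
    rw [norm_smul]; simp [mul_pow, sq_abs]
  rw [hin, hn] at hdesc
  have habs : |I| ≤ ‖h‖ * ‖gg‖ := abs_real_inner_le_norm h gg
  have step1 : -(θ * I) ≤ -(γ₂ * α * I) + (γ₁ - γ₂) * α * (‖h‖ * ‖gg‖) := by
    have p1 : 0 ≤ (θ - γ₂ * α) * (|I| + I) :=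
      mul_nonneg (by linarith) (by linarith [neg_abs_le I])
    have p2 : 0 ≤ ((γ₁ - γ₂) * α - (θ - γ₂ * α)) * |I| :=
      mul_nonneg (by linarith) (abs_nonneg I)
    have p3 : 0 ≤ ((γ₁ - γ₂) * α) * (‖h‖ * ‖gg‖ - |I|) :=
      mul_nonneg (mul_nonneg (by linarith) hα.le) (by linarith)
    nlinarith [p1, p2, p3]
  have step2 : (γ₁ - γ₂) * α * (‖h‖ * ‖gg‖) ≤
      (γ₁ - γ₂) * α * s / 2 * ‖h‖ ^ 2 + c₂ * ‖gg‖ ^ 2 := by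
    have hsq := mul_nonneg hc2nn (sq_nonneg (s * ‖h‖ - ‖gg‖))
    have e1 : (γ₁ - γ₂) * α * (‖h‖ * ‖gg‖) = 2 * s * c₂ * (‖h‖ * ‖gg‖) := by rw [hc2]
    have e2 : (γ₁ - γ₂) * α * s / 2 * ‖h‖ ^ 2 = s ^ 2 * c₂ * ‖h‖ ^ 2 := by rw [hc2]; ring
    rw [e1, e2]
    nlinarith [hsq]
  have step3 : L / 2 * (θ ^ 2 * ‖gg‖ ^ 2) ≤ L / 2 * (γ₁ ^ 2 * α ^ 2 * ‖gg‖ ^ 2) := by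
    have hθ0 : 0 ≤ θ := le_trans (by positivity) hθ1
    have p : 0 ≤ ((γ₁ * α) ^ 2 - θ ^ 2) * ‖gg‖ ^ 2 :=
      mul_nonneg (by nlinarith [mul_nonneg (sub_nonneg.2 hθ2) (by linarith : (0:ℝ) ≤ γ₁ * α + θ)])
        (sq_nonneg _)
    nlinarith [p, hL]
  linarith [hdesc, step1, step2, step3]

end Aux

theorem stmt_14 {n : ℕ} (F : EuclideanSpace ℝ (Fin n) → ℝ)
    (F' : EuclideanSpace ℝ (Fin n) → EuclideanSpace ℝ (Fin n))
    (L Fstar μpl : ℝ) (hL : 0 < L) (hμ : 0 < μpl)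
    (hgrad : ∀ y, HasGradientAt F (F' y) y)
    (hlip : LipschitzWith (Real.toNNReal L) F')
    (hbdd : ∀ y, Fstar ≤ F y)
    (hPL : ∀ y, ‖F' y‖ ^ 2 ≥ 2 * μpl * (F y - Fstar))
    (α γ₁ γ₂ M₂ : ℝ) (hα : 0 < α) (hγ₂ : 0 < γ₂) (hγ : γ₂ < γ₁) (hM₂ : 0 < M₂)
    (hratio : (γ₂ / γ₁) ^ 2 > 1 - 1 / (4 * M₂))
    (hαlt : α < min (1 / (4 * γ₂ * L * M₂)) (2 * γ₂ / (μpl * γ₁ ^ 2)))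
    {Ω : Type*} {m0 : MeasurableSpace Ω} (μ : Measure Ω) [IsProbabilityMeasure μ]
    (ℱ : Filtration ℕ m0)
    (x g : ℕ → Ω → EuclideanSpace ℝ (Fin n))
    (x₀ : EuclideanSpace ℝ (Fin n)) (hx₀ : ∀ ω, x 0 ω = x₀)
    (hadapted : Adapted ℱ x)
    (hstep : ∀ k ω, x (k + 1) ω = x k ω +
      (if ‖g k ω‖ < 1 / γ₁ then (-(γ₁ * α)) • g k ω
       else if ‖g k ω‖ ≤ 1 / γ₂ then (-(α / ‖g k ω‖)) • g k ω
       else (-(γ₂ * α)) • g k ω))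
    (hintg : ∀ k, Integrable (g k) μ)
    (hintF : ∀ k, Integrable (fun ω => F (x k ω)) μ)
    (hint2 : ∀ k, Integrable (fun ω => ‖g k ω‖ ^ 2) μ)
    (hunbiased : ∀ k, μ[g k | ℱ k] =ᵐ[μ] fun ω => F' (x k ω))
    (hvar : ∀ k, ∀ᵐ ω ∂μ,
      (μ[fun ω' => ‖g k ω'‖ ^ 2 | ℱ k]) ω ≤ M₂ * ‖F' (x k ω)‖ ^ 2) :
    (∀ k : ℕ, (∫ ω, F (x (k + 1) ω) ∂μ) - Fstar ≤
        (1 - α * μpl * (γ₁ ^ 2 / (2 * γ₂))) ^ (k + 1) * (F x₀ - Fstar)) ∧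
      Filter.Tendsto (fun k => ∫ ω, F (x k ω) ∂μ) Filter.atTop (nhds Fstar) := by
  have hγ₁ : 0 < γ₁ := hγ₂.trans hγ
  have hα1 : α < 1 / (4 * γ₂ * L * M₂) := lt_of_lt_of_le hαlt (min_le_left _ _)
  have hα2 : α < 2 * γ₂ / (μpl * γ₁ ^ 2) := lt_of_lt_of_le hαlt (min_le_right _ _)
  set ρ : ℝ := 1 - α * μpl * (γ₁ ^ 2 / (2 * γ₂)) with hρdef
  have hρpos : 0 < ρ := by
    rw [lt_div_iff₀ (by positivity)] at hα2
    rw [hρdef]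
    have he : α * μpl * (γ₁ ^ 2 / (2 * γ₂)) = α * (μpl * γ₁ ^ 2) / (2 * γ₂) := by ring
    have : α * μpl * (γ₁ ^ 2 / (2 * γ₂)) < 1 := by
      rw [he, div_lt_one (by positivity)]
      linarith
    linarith
  have hρlt1 : ρ < 1 := by
    have : 0 < α * μpl * (γ₁ ^ 2 / (2 * γ₂)) := by positivity
    rw [hρdef]; linarith
  -- measurability
  have hhm : ∀ k, StronglyMeasurable[ℱ k] (fun ω => F' (x k ω)) := fun k =>
    hlip.continuous.comp_stronglyMeasurable (hadapted k).stronglyMeasurable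
  -- gradient dominated by F - Fstar
  have hgradsq : ∀ y, ‖F' y‖ ^ 2 ≤ 2 * L * (F y - Fstar) := by
    intro y
    have hd := my_descent F F' L hL.le hgrad hlip y ((-(1/L)) • F' y)
    have hb := hbdd (y + (-(1/L)) • F' y)
    have hi : (inner ℝ (F' y) ((-(1/L)) • F' y) : ℝ) = -(1/L) * ‖F' y‖ ^ 2 := by
      rw [real_inner_smul_right, real_inner_self_eq_norm_sq]
    have hn : ‖(-(1/L)) • F' y‖ ^ 2 = (1/L) ^ 2 * ‖F' y‖ ^ 2 := by
      rw [norm_smul]; simp [mul_pow, sq_abs]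
    rw [hi, hn] at hd
    have hcoef : -(1/L) * ‖F' y‖ ^ 2 + L / 2 * ((1/L) ^ 2 * ‖F' y‖ ^ 2)
        = -(1/(2*L)) * ‖F' y‖ ^ 2 := by field_simp; ring
    have hkey : (1/(2*L)) * ‖F' y‖ ^ 2 ≤ F y - Fstar := by linarith
    calc ‖F' y‖ ^ 2 = (2*L) * ((1/(2*L)) * ‖F' y‖ ^ 2) := by field_simp
      _ ≤ (2*L) * (F y - Fstar) := by
          exact mul_le_mul_of_nonneg_left hkey (by positivity)
      _ = 2 * L * (F y - Fstar) := by ring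
  have hh2 : ∀ k, Integrable (fun ω => ‖F' (x k ω)‖ ^ 2) μ := by
    intro k
    apply Integrable.mono' (((hintF k).sub (integrable_const Fstar)).const_mul (2*L))
    · exact ((continuous_pow 2).comp_stronglyMeasurable
        ((hhm k).mono (ℱ.le k)).norm).aestronglyMeasurable
    · filter_upwards with ω
      rw [Real.norm_eq_abs, abs_of_nonneg (sq_nonneg _)]
      exact hgradsq (x k ω)
  have hinner_int : ∀ k, Integrable (fun ω => (inner ℝ (F' (x k ω)) (g k ω) : ℝ)) μ := by
    intro k
    apply Integrable.mono' (((hh2 k).add (hint2 k)).div_const 2)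
    · exact AEStronglyMeasurable.inner ((hhm k).mono (ℱ.le k)).aestronglyMeasurable
        (hintg k).aestronglyMeasurable
    · filter_upwards with ω
      rw [Real.norm_eq_abs]
      have := abs_real_inner_le_norm (F' (x k ω)) (g k ω)
      simp only [Pi.add_apply]
      nlinarith [sq_nonneg (‖F' (x k ω)‖ - ‖g k ω‖), this]
  -- the four integral facts
  have hG : ∀ k, ∫ ω, (inner ℝ (F' (x k ω)) (g k ω) : ℝ) ∂μ = ∫ ω, ‖F' (x k ω)‖ ^ 2 ∂μ :=
    fun k => my_inner_condexp (ℱ.le k) _ _ (hhm k) (hintg k) (hh2 k) (hint2 k) (hunbiased k)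
  have hGnn : ∀ k, 0 ≤ ∫ ω, ‖F' (x k ω)‖ ^ 2 ∂μ := fun k =>
    integral_nonneg (fun ω => sq_nonneg _)
  have hS : ∀ k, ∫ ω, ‖g k ω‖ ^ 2 ∂μ ≤ M₂ * ∫ ω, ‖F' (x k ω)‖ ^ 2 ∂μ := by
    intro k
    have h1 : ∫ ω, ‖g k ω‖ ^ 2 ∂μ = ∫ ω, (μ[fun ω' => ‖g k ω'‖ ^ 2|ℱ k]) ω ∂μ :=
      (integral_condExp (ℱ.le k)).symm
    have h2 : ∫ ω, (μ[fun ω' => ‖g k ω'‖ ^ 2|ℱ k]) ω ∂μ ≤ ∫ ω, M₂ * ‖F' (x k ω)‖ ^ 2 ∂μ :=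
      integral_mono_ae integrable_condExp ((hh2 k).const_mul M₂) (hvar k)
    rw [h1, ← integral_const_mul]
    exact h2
  have hFk : ∀ k, Fstar ≤ ∫ ω, F (x k ω) ∂μ := by
    intro k
    have := integral_mono (integrable_const Fstar) (hintF k) (fun ω => hbdd (x k ω))
    simpa using this
  have hPLint : ∀ k, 2 * μpl * ((∫ ω, F (x k ω) ∂μ) - Fstar) ≤ ∫ ω, ‖F' (x k ω)‖ ^ 2 ∂μ := by
    intro k
    have hmono := integral_mono (((hintF k).sub (integrable_const Fstar)).const_mul (2*μpl))
      (hh2 k) (fun ω => hPL (x k ω))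
    have heq : ∫ ω, 2 * μpl * (F (x k ω) - Fstar) ∂μ
        = 2 * μpl * ((∫ ω, F (x k ω) ∂μ) - Fstar) := by
      rw [integral_const_mul, integral_sub (hintF k) (integrable_const _)]
      simp
    simp only [Pi.sub_apply] at hmono
    rw [heq] at hmono
    exact hmono
  have hEF0 : ∫ ω, F (x 0 ω) ∂μ = F x₀ := by
    simp only [hx₀]
    simp
  rcases le_or_gt 1 M₂ with hM1 | hM1
  · -- main case M₂ ≥ 1
    set s : ℝ := Real.sqrt M₂ with hsdef
    have hs1 : 1 ≤ s := by
      rw [hsdef, show (1:ℝ) = Real.sqrt 1 from Real.sqrt_one.symm]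
      exact Real.sqrt_le_sqrt hM1
    have hs0 : 0 < s := lt_of_lt_of_le one_pos hs1
    have hssq : s ^ 2 = M₂ := Real.sq_sqrt hM₂.le
    set c₂ : ℝ := (γ₁ - γ₂) * α / (2 * s) with hc₂def
    have hc2 : (γ₁ - γ₂) * α = 2 * s * c₂ := by
      rw [hc₂def]; field_simp
    have hc2nn : 0 ≤ c₂ := by
      rw [hc₂def]
      exact div_nonneg (mul_nonneg (by linarith) hα.le) (by positivity)
    have harith := my_arith γ₁ γ₂ L α M₂ s hγ₂ hγ hL hα hs1 hssq hratio hα1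
    rw [← hc₂def] at harith
    have hkey : ∀ k, (∫ ω, F (x (k+1) ω) ∂μ) - Fstar ≤ ρ * ((∫ ω, F (x k ω) ∂μ) - Fstar) := by
      intro k
      have hpt : ∀ ω, F (x (k+1) ω) ≤ F (x k ω) - γ₂ * α * inner ℝ (F' (x k ω)) (g k ω)
          + (γ₁ - γ₂) * α * s / 2 * ‖F' (x k ω)‖ ^ 2
          + (c₂ + L / 2 * γ₁ ^ 2 * α ^ 2) * ‖g k ω‖ ^ 2 := by
        intro ω
        obtain ⟨θ, hθp, hθ1, hθ2⟩ : ∃ θ : ℝ, x (k+1) ω = x k ω + (-θ) • g k ω ∧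
            γ₂ * α ≤ θ ∧ θ ≤ γ₁ * α := by
          rw [hstep k ω]
          split_ifs with h1 h2
          · exact ⟨γ₁ * α, rfl, by nlinarith, le_rfl⟩
          · push_neg at h1
            have hgpos : 0 < ‖g k ω‖ := lt_of_lt_of_le (by positivity) h1
            refine ⟨α / ‖g k ω‖, rfl, ?_, ?_⟩
            · rw [le_div_iff₀ hgpos]
              have h2' : ‖g k ω‖ * γ₂ ≤ 1 := (le_div_iff₀ hγ₂).mp h2
              nlinarith
            · rw [div_le_iff₀ hgpos]
              have h1' : 1 ≤ ‖g k ω‖ * γ₁ := (div_le_iff₀ hγ₁).mp h1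
              nlinarith
          · push_neg at h2
            exact ⟨γ₂ * α, rfl, le_rfl, by nlinarith⟩
        have hdesc := my_descent F F' L hL.le hgrad hlip (x k ω) ((-θ) • g k ω)
        rw [← hθp] at hdesc
        exact my_step γ₁ γ₂ α s L c₂ _ _ hγ₂ hγ hα hs0 hL.le hc2 _ _ θ hθ1 hθ2 hdesc
      have iB : Integrable (fun ω => γ₂ * α * (inner ℝ (F' (x k ω)) (g k ω) : ℝ)) μ :=
        (hinner_int k).const_mul (γ₂ * α)
      have iAB : Integrable (fun ω => F (x k ω)
          - γ₂ * α * (inner ℝ (F' (x k ω)) (g k ω) : ℝ)) μ := (hintF k).sub iB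
      have iC : Integrable (fun ω => (γ₁ - γ₂) * α * s / 2 * ‖F' (x k ω)‖ ^ 2) μ :=
        (hh2 k).const_mul _
      have iABC : Integrable (fun ω => F (x k ω)
          - γ₂ * α * (inner ℝ (F' (x k ω)) (g k ω) : ℝ)
          + (γ₁ - γ₂) * α * s / 2 * ‖F' (x k ω)‖ ^ 2) μ := iAB.add iC
      have iD : Integrable (fun ω => (c₂ + L / 2 * γ₁ ^ 2 * α ^ 2) * ‖g k ω‖ ^ 2) μ :=
        (hint2 k).const_mul _
      have hrhs : Integrable (fun ω => F (x k ω) - γ₂ * α * inner ℝ (F' (x k ω)) (g k ω)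
          + (γ₁ - γ₂) * α * s / 2 * ‖F' (x k ω)‖ ^ 2
          + (c₂ + L / 2 * γ₁ ^ 2 * α ^ 2) * ‖g k ω‖ ^ 2) μ := iABC.add iD
      have hmono := integral_mono (hintF (k+1)) hrhs hpt
      have heq : ∫ ω, (F (x k ω) - γ₂ * α * inner ℝ (F' (x k ω)) (g k ω)
          + (γ₁ - γ₂) * α * s / 2 * ‖F' (x k ω)‖ ^ 2
          + (c₂ + L / 2 * γ₁ ^ 2 * α ^ 2) * ‖g k ω‖ ^ 2) ∂μ
          = (∫ ω, F (x k ω) ∂μ) - γ₂ * α * (∫ ω, (inner ℝ (F' (x k ω)) (g k ω) : ℝ) ∂μ)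
          + (γ₁ - γ₂) * α * s / 2 * (∫ ω, ‖F' (x k ω)‖ ^ 2 ∂μ)
          + (c₂ + L / 2 * γ₁ ^ 2 * α ^ 2) * (∫ ω, ‖g k ω‖ ^ 2 ∂μ) := by
        rw [integral_add iABC iD, integral_add iAB iC, integral_sub (hintF k) iB,
          integral_const_mul, integral_const_mul, integral_const_mul]
      rw [heq, hG k] at hmono
      set EF1 := ∫ ω, F (x (k+1) ω) ∂μ
      set EF := ∫ ω, F (x k ω) ∂μ
      set G := ∫ ω, ‖F' (x k ω)‖ ^ 2 ∂μ
      set S := ∫ ω, ‖g k ω‖ ^ 2 ∂μ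
      have hSk := hS k
      have hGnnk := hGnn k
      have hPLk := hPLint k
      have hFkk := hFk k
      set D : ℝ := γ₁ ^ 2 / (4 * γ₂) with hDdef
      have hD2 : γ₁ ^ 2 / (2 * γ₂) = 2 * D := by rw [hDdef]; ring
      have hDnn : 0 ≤ D := by rw [hDdef]; positivity
      have t0 : 0 ≤ (c₂ + L / 2 * γ₁ ^ 2 * α ^ 2) * (M₂ * G - S) :=
        mul_nonneg (add_nonneg hc2nn (by positivity)) (by linarith)
      have t1 : 0 ≤ (γ₂ * α - (γ₁ - γ₂) * α * s / 2 -
          (c₂ + L / 2 * γ₁ ^ 2 * α ^ 2) * M₂ - α * D) * G :=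
        mul_nonneg (by rw [hDdef]; linarith [harith]) hGnnk
      have t2 : 0 ≤ (α * D) * (G - 2 * μpl * (EF - Fstar)) :=
        mul_nonneg (mul_nonneg hα.le hDnn) (by linarith [hPLk])
      have hρeq : ρ = 1 - α * μpl * (2 * D) := by rw [hρdef, hD2]
      rw [hρeq]
      nlinarith [hmono, t0, t1, t2]
    have hiter : ∀ k, (∫ ω, F (x k ω) ∂μ) - Fstar ≤ ρ ^ k * (F x₀ - Fstar) := by
      intro k
      induction k with
      | zero => simp [hEF0]
      | succ k ih =>
        calc (∫ ω, F (x (k+1) ω) ∂μ) - Fstar ≤ ρ * ((∫ ω, F (x k ω) ∂μ) - Fstar) := hkey k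
          _ ≤ ρ * (ρ ^ k * (F x₀ - Fstar)) := mul_le_mul_of_nonneg_left ih hρpos.le
          _ = ρ ^ (k+1) * (F x₀ - Fstar) := by ring
    refine ⟨fun k => hiter (k+1), ?_⟩
    have hsq0 : Filter.Tendsto (fun k => (∫ ω, F (x k ω) ∂μ) - Fstar)
        Filter.atTop (nhds 0) := by
      apply squeeze_zero (fun k => by linarith [hFk k]) (fun k => hiter k)
      have := tendsto_pow_atTop_nhds_zero_of_lt_one hρpos.le hρlt1
      simpa using this.mul_const (F x₀ - Fstar)
    have hfin := hsq0.add_const Fstar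
    simp only [sub_add_cancel, zero_add] at hfin
    exact hfin
  · -- degenerate case M₂ < 1
    have hzero : ∀ k, ∫ ω, F (x k ω) ∂μ = Fstar := by
      intro k
      have hCS : ∫ ω, (inner ℝ (F' (x k ω)) (g k ω) : ℝ) ∂μ ≤
          ((∫ ω, ‖F' (x k ω)‖ ^ 2 ∂μ) + ∫ ω, ‖g k ω‖ ^ 2 ∂μ) / 2 := by
        have hmono := integral_mono (hinner_int k) (((hh2 k).add (hint2 k)).div_const 2)
          (fun ω => ?_)
        · simp only [Pi.add_apply] at hmono
          rw [integral_div, integral_add (hh2 k) (hint2 k)] at hmono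
          exact hmono
        · have h1 := real_inner_le_norm (F' (x k ω)) (g k ω)
          have h2 := sq_nonneg (‖F' (x k ω)‖ - ‖g k ω‖)
          simp only [Pi.div_apply, Pi.add_apply]
          nlinarith
      have hGk := hG k
      have hSk := hS k
      have hGnnk := hGnn k
      have hGzero : ∫ ω, ‖F' (x k ω)‖ ^ 2 ∂μ = 0 := by nlinarith
      have := hPLint k
      rw [hGzero] at this
      have := hFk k
      nlinarith
    constructor
    · intro k
      rw [hzero (k + 1)]
      have hF0 : F x₀ - Fstar = 0 := by rw [← hEF0, hzero 0, sub_self]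
      rw [hF0, mul_zero]
      linarith
    · have : (fun k => ∫ ω, F (x k ω) ∂μ) = fun _ => Fstar := funext hzero
      rw [this]
      exact tendsto_const_nhds
end
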